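/- arXiv:1606.03174 — 4 statements merged into one kernel-verified Lean document; each statement's English description precedes it below -/
import Mathlib

section
/- Let D ⊆ ℝ^d be a bounded open set with Lebesgue measure λ, and let f, g ∈ L²(D,λ) with f ≥ 0 and g ≥ 0 λ-a.e. Then there exists a measurable function f̃ : D → ℝ which is a rearrangement of f (i.e. λ({f̃ > α}) = λ({f > α}) for every α ∈ ℝ) such that ∫_D f̃ g dλ ≤ ∫_D h g dλ for every measurable function h : D → ℝ that is a rearrangement of f. -/
open MeasureTheory Set Filter Topology ENNReal

variable {X : Type*} [MeasurableSpace X]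

lemma cdf_transform (ℓ : Measure ℝ) [IsFiniteMeasure ℓ] (hna : ∀ b : ℝ, ℓ {b} = 0) (t : ℝ) :
    ℓ {b | (ℓ (Set.Iio b)).toReal < t} = ENNReal.ofReal (min t (ℓ Set.univ).toReal) := by
  set F : ℝ → ℝ := fun b => (ℓ (Set.Iio b)).toReal with hFdef
  have hFmono : Monotone F := fun a b hab =>
    ENNReal.toReal_mono (measure_ne_top ℓ _) (measure_mono (Iio_subset_Iio hab))
  have hFnn : ∀ b, 0 ≤ F b := fun b => ENNReal.toReal_nonneg
  have key : ∀ b, F b < t ↔ ℓ (Iio b) < ENNReal.ofReal t := fun b =>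
    (ENNReal.lt_ofReal_iff_toReal_lt (measure_ne_top ℓ _)).symm
  by_cases ht : t ≤ 0
  · have hempty : {b | F b < t} = ∅ := by
      ext b; simp only [mem_setOf_eq, mem_empty_iff_false, iff_false, not_lt]
      exact ht.trans (hFnn b)
    rw [hempty, measure_empty]
    symm; rw [ENNReal.ofReal_eq_zero]
    exact (min_le_left _ _).trans ht
  push_neg at ht
  have hne : ∃ b, F b < t := by
    have hI : (⋂ n : ℕ, Iio (-(n : ℝ))) = ∅ := by
      ext x; simp only [mem_iInter, mem_Iio, mem_empty_iff_false, iff_false, not_forall, not_lt]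
      obtain ⟨n, hn⟩ := exists_nat_gt (-x)
      exact ⟨n, by linarith⟩
    have h0 : Tendsto (fun n : ℕ => ℓ (Iio (-(n : ℝ)))) atTop (𝓝 0) := by
      have := tendsto_measure_iInter_atTop (μ := ℓ) (s := fun n : ℕ => Iio (-(n : ℝ)))
        (fun n => measurableSet_Iio.nullMeasurableSet)
        (fun m n hmn => Iio_subset_Iio (by exact_mod_cast neg_le_neg (Nat.cast_le.2 hmn)))
        ⟨0, measure_ne_top ℓ _⟩
      rwa [hI, measure_empty] at this
    have := h0.eventually_lt_const (ENNReal.ofReal_pos.2 ht)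
    obtain ⟨n, hn⟩ := this.exists
    exact ⟨-(n:ℝ), (key _).2 hn⟩
  by_cases hbdd : BddAbove {b | F b < t}
  · -- bounded case
    set b' := sSup {b | F b < t} with hb'
    have hSne : {b | F b < t}.Nonempty := hne
    have hmem_lt : ∀ b < b', F b < t := by
      intro b hb
      obtain ⟨s, hs, hbs⟩ := exists_lt_of_lt_csSup hSne hb
      exact lt_of_le_of_lt (hFmono hbs.le) hs
    have hub : ∀ b, b' < b → t ≤ F b := by
      intro b hb
      by_contra hc
      exact absurd (le_csSup hbdd (not_le.1 hc : F b < t)) (not_le.2 hb)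
    have h1 : ℓ (Iio b') ≤ ENNReal.ofReal t := by
      have hU : (⋃ n : ℕ, Iio (b' - 1/(n+1))) = Iio b' := by
        ext x
        simp only [mem_iUnion, mem_Iio]
        constructor
        · rintro ⟨n, hn⟩
          have : (0:ℝ) < 1/(n+1) := by positivity
          linarith
        · intro hx
          obtain ⟨n, hn⟩ := exists_nat_one_div_lt (by linarith : (0:ℝ) < b' - x)
          exact ⟨n, by push_cast at hn ⊢; linarith⟩
      rw [← hU, Monotone.measure_iUnion]
      · refine iSup_le fun n => ?_
        have : (0:ℝ) < 1/(n+1) := by positivity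
        exact ((key _).1 (hmem_lt _ (by linarith))).le
      · intro m n hmn
        apply Iio_subset_Iio
        have : (1:ℝ)/(n+1) ≤ 1/(m+1) := by
          apply one_div_le_one_div_of_le (by positivity)
          exact_mod_cast by omega
        linarith
    have h2 : ENNReal.ofReal t ≤ ℓ (Iic b') := by
      have hI : (⋂ n : ℕ, Iio (b' + 1/(n+1))) = Iic b' := by
        ext x
        simp only [mem_iInter, mem_Iio, mem_Iic]
        constructor
        · intro hx
          by_contra hc
          push_neg at hc
          obtain ⟨n, hn⟩ := exists_nat_one_div_lt (by linarith : (0:ℝ) < x - b')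
          have := hx n
          push_cast at hn
          linarith
        · intro hx n
          have : (0:ℝ) < 1/(n+1) := by positivity
          linarith
      rw [← hI, Antitone.measure_iInter]
      · refine le_iInf fun n => ?_
        apply ENNReal.ofReal_le_of_le_toReal
        refine hub _ ?_
        have : (0:ℝ) < 1/(n+1) := by positivity
        linarith
      · intro m n hmn
        apply Iio_subset_Iio
        have : (1:ℝ)/(n+1) ≤ 1/(m+1) := by
          apply one_div_le_one_div_of_le (by positivity)
          exact_mod_cast by omega
        linarith
      · exact fun n => measurableSet_Iio.nullMeasurableSet
      · exact ⟨0, measure_ne_top ℓ _⟩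
    have h3 : ℓ (Iic b') = ℓ (Iio b') := by
      refine le_antisymm ?_ (measure_mono Iio_subset_Iic_self)
      have : Iic b' ⊆ Iio b' ∪ {b'} := by
        intro x hx
        rcases lt_or_eq_of_le (mem_Iic.1 hx) with h | h
        · exact Or.inl h
        · exact Or.inr h
      calc ℓ (Iic b') ≤ ℓ (Iio b' ∪ {b'}) := measure_mono this
        _ ≤ ℓ (Iio b') + ℓ {b'} := measure_union_le _ _
        _ = ℓ (Iio b') := by rw [hna, add_zero]
    have hlt : ℓ (Iio b') = ENNReal.ofReal t := le_antisymm h1 (h3 ▸ h2)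
    have hS : ℓ {b | F b < t} = ENNReal.ofReal t := by
      refine le_antisymm ?_ ?_
      · calc ℓ {b | F b < t} ≤ ℓ (Iic b') := measure_mono (fun b hb => le_csSup hbdd hb)
          _ = ENNReal.ofReal t := by rw [h3, hlt]
      · rw [← hlt]
        exact measure_mono (fun b hb => hmem_lt b hb)
    have htL : t ≤ (ℓ univ).toReal := by
      have h4 : ENNReal.ofReal t ≤ ℓ univ := hlt ▸ measure_mono (subset_univ _)
      have := ENNReal.toReal_mono (measure_ne_top ℓ _) h4
      rwa [ENNReal.toReal_ofReal ht.le] at this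
    rw [hS, min_eq_left htL]
  · -- unbounded case
    have hSuniv : {b | F b < t} = univ := by
      ext b; simp only [mem_setOf_eq, mem_univ, iff_true]
      obtain ⟨y, hy, hby⟩ := not_bddAbove_iff.1 hbdd b
      exact lt_of_le_of_lt (hFmono hby.le) hy
    rw [hSuniv]
    have hL : (ℓ univ).toReal ≤ t := by
      have hU : (⋃ n : ℕ, Iio (n : ℝ)) = univ := by
        ext x; simp only [mem_iUnion, mem_Iio, mem_univ, iff_true]
        exact exists_nat_gt x
      have hle : ℓ univ ≤ ENNReal.ofReal t := by
        rw [← hU, Monotone.measure_iUnion (fun m n hmn => Iio_subset_Iio (by exact_mod_cast hmn))]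
        refine iSup_le fun n => ?_
        have : F n < t := by
          have := hSuniv ▸ mem_univ (n : ℝ)
          simpa using ((by rw [hSuniv]; trivial) : (n:ℝ) ∈ {b | F b < t})
        exact ((key _).1 this).le
      exact ENNReal.toReal_le_of_le_ofReal ht.le hle
    rw [min_eq_right hL, ENNReal.ofReal_toReal (measure_ne_top ℓ _)]

noncomputable def rnk (ν : Measure X) (g u : X → ℝ) (x : X) : ℝ :=
  (ν {y | g y < g x}).toReal + (ν {y | g y = g x ∧ u y < u x}).toReal

lemma rnk_nonneg (ν : Measure X) (g u : X → ℝ) (x : X) : 0 ≤ rnk ν g u x :=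
  add_nonneg ENNReal.toReal_nonneg ENNReal.toReal_nonneg

lemma rnk_measurable (ν : Measure X) [IsFiniteMeasure ν] {g u : X → ℝ}
    (hg : Measurable g) (hu : Measurable u) : Measurable (rnk ν g u) := by
  have hα : Measurable fun x => (ν {y | g y < g x}).toReal := by
    have hmono : Monotone fun a : ℝ => (ν {y | g y < a}).toReal := fun a b hab =>
      ENNReal.toReal_mono (measure_ne_top _ _) (measure_mono fun y hy => lt_of_lt_of_le hy hab)
    exact hmono.measurable.comp hg
  apply hα.add
  set A := {a : ℝ | ν {x | g x = a} ≠ 0} with hA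
  have hAc : A.Countable := by
    have := Measure.countable_meas_level_set_pos (μ := ν) hg
    exact this.mono fun a ha => (by exact pos_iff_ne_zero.2 ha)
  haveI := hAc.to_subtype
  have heq : (fun x => (ν {y | g y = g x ∧ u y < u x}).toReal)
      = fun x => (∑' a : A, ((g ⁻¹' {(a : ℝ)}).indicator
          (fun x' => ν {y | g y = (a : ℝ) ∧ u y < u x'}) x)).toReal := by
    funext x
    congr 1
    by_cases hx : g x ∈ A
    · rw [tsum_eq_single (⟨g x, hx⟩ : A)]
      · simp only [Set.indicator_of_mem (show x ∈ g ⁻¹' {g x} from rfl)]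
      · intro b hb
        apply Set.indicator_of_notMem
        intro hgx
        exact hb (Subtype.ext (by simpa using hgx.symm))
    · have h0 : ν {y | g y = g x ∧ u y < u x} = 0 :=
        measure_mono_null (t := {y | g y = g x}) (fun y hy => hy.1) (by simpa [hA] using hx)
      rw [h0]
      symm
      have : ∀ a : A, ((g ⁻¹' {(a : ℝ)}).indicator
          (fun x' => ν {y | g y = (a : ℝ) ∧ u y < u x'}) x) = 0 := by
        intro a
        apply Set.indicator_of_notMem
        intro hgx
        exact hx (by simpa using (show g x = (a : ℝ) by simpa using hgx) ▸ a.2)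
      simp [this]
  rw [heq]
  apply ENNReal.measurable_toReal.comp
  apply Measurable.ennreal_tsum
  intro a
  apply Measurable.indicator _ (hg (measurableSet_singleton _))
  have hmono : Monotone fun b : ℝ => ν {y | g y = (a : ℝ) ∧ u y < b} := fun b b' hbb =>
    measure_mono fun y hy => ⟨hy.1, lt_of_lt_of_le hy.2 hbb⟩
  exact hmono.measurable.comp hu

lemma rnk_uniform (ν : Measure X) [IsFiniteMeasure ν] {g u : X → ℝ}
    (hg : Measurable g) (hu : Measurable u) (hua : ∀ b : ℝ, ν {x | u x = b} = 0) (c : ℝ) :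
    ν {x | rnk ν g u x < c} = ENNReal.ofReal (min c (ν Set.univ).toReal) := by
  by_cases hc : c ≤ 0
  · have hempty : {x | rnk ν g u x < c} = ∅ := by
      ext x
      simp only [mem_setOf_eq, mem_empty_iff_false, iff_false, not_lt]
      exact hc.trans (rnk_nonneg ν g u x)
    rw [hempty, measure_empty]
    symm
    rw [ENNReal.ofReal_eq_zero]
    exact (min_le_left _ _).trans hc
  push_neg at hc
  -- basic objects
  set A := {a : ℝ | ν {x | g x = a} ≠ 0} with hAdef
  have hAc : A.Countable := by
    have := Measure.countable_meas_level_set_pos (μ := ν) hg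
    exact this.mono fun a ha => (by exact pos_iff_ne_zero.2 ha)
  have hAm : MeasurableSet A := hAc.measurableSet
  have hαmono : Monotone fun a : ℝ => (ν {y | g y < a}).toReal := fun a b hab =>
    ENNReal.toReal_mono (measure_ne_top _ _) (measure_mono fun y hy => lt_of_lt_of_le hy hab)
  set S := {a : ℝ | (ν {y | g y < a}).toReal < c} with hSdef
  have hSm : MeasurableSet S := hαmono.measurable measurableSet_Iio
  have hglt : ∀ a : ℝ, MeasurableSet {y | g y < a} := fun a => hg measurableSet_Iio
  have hgeq : ∀ a : ℝ, MeasurableSet {y | g y = a} := fun a => hg (measurableSet_singleton a)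
  have hgle : ∀ a : ℝ, MeasurableSet {y | g y ≤ a} := fun a => hg measurableSet_Iic
  have hσm : MeasurableSet {x | rnk ν g u x < c} :=
    (rnk_measurable ν hg hu) measurableSet_Iio
  -- the per-level computation, valid for every a : ℝ
  have hlevel : ∀ a : ℝ, ν ({x | rnk ν g u x < c} ∩ {x | g x = a})
      = ENNReal.ofReal (min (c - (ν {y | g y < a}).toReal) (ν {y | g y = a}).toReal) := by
    intro a
    set ℓ : Measure ℝ := Measure.map u (ν.restrict {x | g x = a}) with hℓdef
    haveI : IsFiniteMeasure (ν.restrict {x | g x = a}) := inferInstance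
    haveI : IsFiniteMeasure ℓ := Measure.isFiniteMeasure_map _ u
    have hℓap : ∀ {T : Set ℝ}, MeasurableSet T → ℓ T = ν (u ⁻¹' T ∩ {x | g x = a}) := by
      intro T hT
      rw [hℓdef, Measure.map_apply hu hT, Measure.restrict_apply (hu hT)]
    have hℓIio : ∀ b : ℝ, ℓ (Iio b) = ν {y | g y = a ∧ u y < b} := by
      intro b
      rw [hℓap measurableSet_Iio]
      congr 1
      ext y
      simp only [mem_inter_iff, mem_preimage, mem_Iio, mem_setOf_eq]
      tauto
    have hℓatom : ∀ b : ℝ, ℓ {b} = 0 := by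
      intro b
      rw [hℓap (measurableSet_singleton b)]
      exact measure_mono_null (fun y hy => hy.1) (hua b)
    have hℓuniv : ℓ univ = ν {y | g y = a} := by
      rw [hℓap MeasurableSet.univ]
      simp
    -- rewrite the set
    have hset : {x | rnk ν g u x < c} ∩ {x | g x = a}
        = u ⁻¹' {b | (ℓ (Iio b)).toReal < c - (ν {y | g y < a}).toReal} ∩ {x | g x = a} := by
      ext x
      simp only [mem_inter_iff, mem_setOf_eq, mem_preimage]
      constructor
      · rintro ⟨hr, hga⟩
        refine ⟨?_, hga⟩
        rw [hℓIio]
        have : rnk ν g u x = (ν {y | g y < a}).toReal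
            + (ν {y | g y = a ∧ u y < u x}).toReal := by
          rw [rnk, hga]
        rw [this] at hr
        linarith
      · rintro ⟨hb, hga⟩
        rw [hℓIio] at hb
        refine ⟨?_, hga⟩
        have : rnk ν g u x = (ν {y | g y < a}).toReal
            + (ν {y | g y = a ∧ u y < u x}).toReal := by
          rw [rnk, hga]
        rw [this]
        linarith
    have hTm : MeasurableSet {b | (ℓ (Iio b)).toReal < c - (ν {y | g y < a}).toReal} := by
      have : Monotone fun b : ℝ => (ℓ (Iio b)).toReal := fun b b' hbb =>
        ENNReal.toReal_mono (measure_ne_top _ _) (measure_mono (Iio_subset_Iio hbb))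
      exact this.measurable measurableSet_Iio
    rw [hset, ← hℓap hTm, cdf_transform ℓ hℓatom, hℓuniv]
  -- decomposition helper
  haveI := hAc.to_subtype
  have hbi : ∀ B : Set X, MeasurableSet B →
      ν (B ∩ g ⁻¹' A) = ∑' a : A, ν (B ∩ {x | g x = (a : ℝ)}) := by
    intro B hB
    have hU : B ∩ g ⁻¹' A = ⋃ a ∈ A, B ∩ {x | g x = a} := by
      ext x
      simp only [mem_inter_iff, mem_preimage, mem_iUnion, mem_setOf_eq, exists_prop]
      constructor
      · rintro ⟨hxB, hxA⟩; exact ⟨g x, hxA, hxB, rfl⟩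
      · rintro ⟨a, haA, hxB, hxa⟩; exact ⟨hxB, hxa ▸ haA⟩
    rw [hU, measure_biUnion hAc ?_ fun a _ => hB.inter (hgeq a)]
    intro a _ b _ hab
    refine Set.disjoint_left.2 fun x hx hx' => hab ?_
    rw [← hx.2, ← hx'.2]
  have hθ0 : ∀ x, g x ∉ A → ν {y | g y = g x ∧ u y < u x} = 0 := fun x hx =>
    measure_mono_null (t := {y | g y = g x}) (fun y hy => hy.1) (by simpa [hAdef] using hx)
  have hnon : {x | rnk ν g u x < c} ∩ g ⁻¹' Aᶜ = g ⁻¹' (S \ A) := by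
    ext x
    simp only [mem_inter_iff, mem_setOf_eq, mem_preimage, mem_compl_iff, mem_diff, hSdef]
    constructor
    · rintro ⟨hr, hx⟩
      refine ⟨?_, hx⟩
      rw [rnk, hθ0 x hx] at hr
      simpa using hr
    · rintro ⟨hxS, hx⟩
      refine ⟨?_, hx⟩
      rw [rnk, hθ0 x hx]
      simpa using hxS
  have hsplit : ν {x | rnk ν g u x < c} = ν (g ⁻¹' (S \ A)) +
      ∑' a : A, ENNReal.ofReal
        (min (c - (ν {y | g y < (a : ℝ)}).toReal) (ν {y | g y = (a : ℝ)}).toReal) := by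
    have hdecomp : {x | rnk ν g u x < c}
        = ({x | rnk ν g u x < c} ∩ g ⁻¹' Aᶜ) ∪ ({x | rnk ν g u x < c} ∩ g ⁻¹' A) := by
      rw [← Set.inter_union_distrib_left]
      rw [show g ⁻¹' Aᶜ ∪ g ⁻¹' A = univ by ext x; simp [em]]
      rw [Set.inter_univ]
    rw [hdecomp, measure_union ?_ (hσm.inter (hg hAm)), hnon, hbi _ hσm,
      tsum_congr fun a : A => hlevel (a : ℝ)]
    · exact Set.disjoint_left.2 fun x hx hx' => hx.2 hx'.2
  rw [hsplit]
  by_cases hbdd : BddAbove S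
  · -- bounded case
    have hSne : S.Nonempty := by
      have hI : (⋂ n : ℕ, {y | g y < -(n : ℝ)}) = ∅ := by
        ext x
        simp only [mem_iInter, mem_setOf_eq, mem_empty_iff_false, iff_false, not_forall, not_lt]
        obtain ⟨n, hn⟩ := exists_nat_gt (-(g x))
        exact ⟨n, by linarith⟩
      have h0 : Tendsto (fun n : ℕ => ν {y | g y < -(n : ℝ)}) atTop (𝓝 0) := by
        have := tendsto_measure_iInter_atTop (μ := ν) (s := fun n : ℕ => {y | g y < -(n : ℝ)})
          (fun n => (hglt _).nullMeasurableSet)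
          (fun m n hmn => fun y hy => lt_of_lt_of_le hy
            (neg_le_neg (by exact_mod_cast hmn : (m : ℝ) ≤ n)))
          ⟨0, measure_ne_top ν _⟩
        rwa [hI, measure_empty] at this
      obtain ⟨n, hn⟩ := (h0.eventually_lt_const (ENNReal.ofReal_pos.2 hc)).exists
      exact ⟨-(n : ℝ), (ENNReal.lt_ofReal_iff_toReal_lt (measure_ne_top _ _)).1 hn⟩
    set a' := sSup S with ha'
    have f1 : ∀ a < a', a ∈ S := by
      intro a ha
      obtain ⟨s, hs, has⟩ := exists_lt_of_lt_csSup hSne ha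
      exact lt_of_le_of_lt (hαmono has.le) hs
    have f2 : ∀ a, a' < a → c ≤ (ν {y | g y < a}).toReal := by
      intro a ha
      by_contra hlt
      push_neg at hlt
      exact absurd (le_csSup hbdd hlt) (not_le.2 ha)
    have f3 : ν {y | g y < a'} ≤ ENNReal.ofReal c := by
      have hU : (⋃ n : ℕ, {y | g y < a' - 1/(n+1)}) = {y | g y < a'} := by
        ext y
        simp only [mem_iUnion, mem_setOf_eq]
        constructor
        · rintro ⟨n, hn⟩
          have : (0:ℝ) < 1/(n+1) := by positivity
          linarith
        · intro hy
          obtain ⟨n, hn⟩ := exists_nat_one_div_lt (by linarith : (0:ℝ) < a' - g y)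
          exact ⟨n, by push_cast at hn ⊢; linarith⟩
      rw [← hU, Monotone.measure_iUnion]
      · refine iSup_le fun n => ?_
        have hpos : (0:ℝ) < 1/(n+1) := by positivity
        have : (a' - 1/(n+1)) ∈ S := f1 _ (by linarith)
        exact le_of_lt ((ENNReal.lt_ofReal_iff_toReal_lt (measure_ne_top _ _)).2 this)
      · intro m n hmn y hy
        have h1 : (1:ℝ)/(n+1) ≤ 1/(m+1) := by
          apply one_div_le_one_div_of_le (by positivity)
          exact_mod_cast by omega
        simp only [mem_setOf_eq] at hy ⊢
        linarith
    have f4 : ENNReal.ofReal c ≤ ν {y | g y ≤ a'} := by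
      have hI : (⋂ n : ℕ, {y | g y < a' + 1/(n+1)}) = {y | g y ≤ a'} := by
        ext y
        simp only [mem_iInter, mem_setOf_eq]
        constructor
        · intro hy
          by_contra hcon
          push_neg at hcon
          obtain ⟨n, hn⟩ := exists_nat_one_div_lt (by linarith : (0:ℝ) < g y - a')
          have := hy n
          push_cast at hn
          linarith
        · intro hy n
          have : (0:ℝ) < 1/(n+1) := by positivity
          linarith
      rw [← hI, Antitone.measure_iInter]
      · refine le_iInf fun n => ?_
        apply ENNReal.ofReal_le_of_le_toReal
        refine f2 _ ?_
        have : (0:ℝ) < 1/(n+1) := by positivity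
        linarith
      · intro m n hmn y hy
        have h1 : (1:ℝ)/(n+1) ≤ 1/(m+1) := by
          apply one_div_le_one_div_of_le (by positivity)
          exact_mod_cast by omega
        simp only [mem_setOf_eq] at hy ⊢
        linarith
      · exact fun n => (hglt _).nullMeasurableSet
      · exact ⟨0, measure_ne_top ν _⟩
    have hSIio : Iio a' ⊆ S := fun a ha => f1 a ha
    have hSIic : S ⊆ Iic a' := fun a ha => le_csSup hbdd ha
    set νlt := ν {y | g y < a'} with hνlt
    set wstar := ν {y | g y = a'} with hwstar
    have hsumle : ν {y | g y ≤ a'} = νlt + wstar := by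
      rw [hνlt, hwstar, ← measure_union ?_ (hgeq a')]
      · congr 1
        ext y
        simp only [mem_union, mem_setOf_eq]
        exact le_iff_lt_or_eq
      · exact Set.disjoint_left.2 fun y hy hy' => (ne_of_lt hy) hy'
    have hνltc : νlt.toReal ≤ c := ENNReal.toReal_le_of_le_ofReal hc.le f3
    have hcνle : c ≤ (ν {y | g y ≤ a'}).toReal := by
      have := ENNReal.toReal_mono (measure_ne_top ν _) f4
      rwa [ENNReal.toReal_ofReal hc.le] at this
    set r := min (c - νlt.toReal) wstar.toReal with hrdef
    -- per-atom identification
    have hterm : ∀ a : A, ENNReal.ofReal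
        (min (c - (ν {y | g y < (a : ℝ)}).toReal) (ν {y | g y = (a : ℝ)}).toReal)
        = ν ({x | g x = (a : ℝ)} ∩ g ⁻¹' (S ∩ Iio a'))
          + (if (a : ℝ) = a' then ENNReal.ofReal r else 0) := by
      rintro ⟨a, ha⟩
      dsimp only
      rcases lt_trichotomy a a' with hlt | heq | hgt
      · have haS : a ∈ S := f1 a hlt
        have hWsub : {x | g x = a} ⊆ g ⁻¹' (S ∩ Iio a') := by
          intro x hx
          have hx' : g x = a := hx
          simp only [mem_preimage, mem_inter_iff, mem_Iio, hx']
          exact ⟨haS, hlt⟩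
        rw [if_neg hlt.ne, add_zero, inter_eq_self_of_subset_left hWsub]
        have hbS : (a + a')/2 ∈ S := f1 _ (by linarith)
        have hmsum : ν {y | g y < a} + ν {y | g y = a} ≤ ν {y | g y < (a + a')/2} := by
          rw [← measure_union ?_ (hgeq a)]
          · apply measure_mono
            rintro y (hy | hy) <;> simp only [mem_setOf_eq] at hy ⊢ <;> linarith [hy]
          · exact Set.disjoint_left.2 fun y hy hy' => (ne_of_lt hy) hy'
        have h2 : (ν {y | g y < a}).toReal + (ν {y | g y = a}).toReal ≤ c := by
          rw [← ENNReal.toReal_add (measure_ne_top _ _) (measure_ne_top _ _)]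
          exact le_trans (ENNReal.toReal_mono (measure_ne_top _ _) hmsum) hbS.le
        rw [min_eq_right (by linarith), ENNReal.ofReal_toReal (measure_ne_top _ _)]
      · have hempty : {x | g x = a} ∩ g ⁻¹' (S ∩ Iio a') = ∅ := by
          ext x
          simp only [mem_inter_iff, mem_setOf_eq, mem_preimage, mem_Iio,
            mem_empty_iff_false, iff_false, not_and]
          intro hx hS
          rw [hx, heq]
          exact lt_irrefl _
        rw [if_pos heq, hempty, measure_empty, zero_add, heq, hrdef]
      · have h0 : c - (ν {y | g y < a}).toReal ≤ 0 := by linarith [f2 a hgt]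
        have hempty : {x | g x = a} ∩ g ⁻¹' (S ∩ Iio a') = ∅ := by
          ext x
          simp only [mem_inter_iff, mem_setOf_eq, mem_preimage, mem_Iio,
            mem_empty_iff_false, iff_false, not_and]
          intro hx hS
          rw [hx]
          exact not_lt.2 hgt.le
        rw [if_neg hgt.ne', hempty, measure_empty, zero_add,
          ENNReal.ofReal_eq_zero.2 (le_trans (min_le_left _ _) h0)]
    rw [tsum_congr hterm, ENNReal.tsum_add]
    have htsum1 : ∑' a : A, ν ({x | g x = (a : ℝ)} ∩ g ⁻¹' (S ∩ Iio a'))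
        = ν (g ⁻¹' (S ∩ Iio a') ∩ g ⁻¹' A) := by
      rw [hbi _ (hg (hSm.inter measurableSet_Iio))]
      exact tsum_congr fun a => by rw [Set.inter_comm]
    have hofRealr0 : wstar = 0 → ENNReal.ofReal r = 0 := by
      intro hw0
      rw [ENNReal.ofReal_eq_zero, hrdef, hw0]
      simp [ENNReal.toReal_nonneg]
    have htsum2 : ∑' a : A, (if (a : ℝ) = a' then ENNReal.ofReal r else 0)
        = ENNReal.ofReal r := by
      by_cases haA : a' ∈ A
      · rw [tsum_eq_single (⟨a', haA⟩ : A)]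
        · rw [if_pos rfl]
        · intro b hb
          rw [if_neg (fun hh => hb (Subtype.ext hh))]
      · have hz : ∀ a : A, (if (a : ℝ) = a' then ENNReal.ofReal r else 0) = 0 := by
          rintro ⟨a, ha⟩
          dsimp only
          rw [if_neg]
          intro hh
          exact haA (hh ▸ ha)
        rw [tsum_congr hz, tsum_zero, hofRealr0]
        simpa [hAdef] using haA
    rw [htsum1, htsum2, ← add_assoc, ← measure_union ?_ ((hg (hSm.inter measurableSet_Iio)).inter (hg hAm))]
    swap
    · exact Set.disjoint_left.2 fun x hx hx' => hx.2 hx'.2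
    have hcM : c ≤ (ν univ).toReal := le_trans hcνle
      (ENNReal.toReal_mono (measure_ne_top _ _) (measure_mono (subset_univ _)))
    rw [min_eq_left hcM]
    have hUset : g ⁻¹' (S \ A) ∪ g ⁻¹' (S ∩ Iio a') ∩ g ⁻¹' A
        = g ⁻¹' ((S \ A) ∪ (S ∩ Iio a' ∩ A)) := by
      rw [Set.preimage_union, Set.preimage_inter]
      rfl
    rw [hUset]
    by_cases ha'S : a' ∈ S
    · by_cases haA : a' ∈ A
      · -- U = Iio a'
        have hU : (S \ A) ∪ (S ∩ Iio a' ∩ A) = Iio a' := by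
          ext a
          simp only [mem_union, mem_diff, mem_inter_iff, mem_Iio]
          constructor
          · rintro (⟨haS, hnA⟩ | ⟨⟨_, hlt⟩, _⟩)
            · rcases lt_or_eq_of_le (mem_Iic.1 (hSIic haS)) with h | h
              · exact h
              · exact absurd (h ▸ haA) hnA
            · exact hlt
          · intro hlt
            by_cases hA2 : a ∈ A
            · exact Or.inr ⟨⟨f1 a hlt, hlt⟩, hA2⟩
            · exact Or.inl ⟨f1 a hlt, hA2⟩
        rw [hU]
        have hνltS : νlt.toReal < c := ha'S
        have hrc : r = c - νlt.toReal := by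
          rw [hrdef, min_eq_left]
          have : c ≤ νlt.toReal + wstar.toReal := by
            rw [← ENNReal.toReal_add (measure_ne_top _ _) (measure_ne_top _ _), ← hsumle]
            exact hcνle
          linarith
        rw [hrc]
        rw [show ν (g ⁻¹' Iio a') = νlt from rfl]
        rw [show ENNReal.ofReal c = ENNReal.ofReal (νlt.toReal + (c - νlt.toReal)) by ring_nf,
          ENNReal.ofReal_add ENNReal.toReal_nonneg (by linarith),
          ENNReal.ofReal_toReal (measure_ne_top _ _)]
      · -- a' ∈ S, a' ∉ A : U = S, wstar = 0
        have hw0 : wstar = 0 := by simpa [hwstar, hAdef] using haA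
        have hU : (S \ A) ∪ (S ∩ Iio a' ∩ A) = S := by
          ext a
          simp only [mem_union, mem_diff, mem_inter_iff, mem_Iio]
          constructor
          · rintro (⟨haS, _⟩ | ⟨⟨haS, _⟩, _⟩) <;> exact haS
          · intro haS
            by_cases hA2 : a ∈ A
            · refine Or.inr ⟨⟨haS, ?_⟩, hA2⟩
              rcases lt_or_eq_of_le (mem_Iic.1 (hSIic haS)) with h | h
              · exact h
              · exact absurd (h ▸ hA2) haA
            · exact Or.inl ⟨haS, hA2⟩
        rw [hU, hofRealr0 hw0, add_zero]
        have hνle : ν {y | g y ≤ a'} = νlt := by rw [hsumle, hw0, add_zero]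
        have hle1 : ν (g ⁻¹' S) ≤ ENNReal.ofReal c := by
          have hsub : g ⁻¹' S ⊆ {y | g y ≤ a'} := fun x hx => mem_Iic.1 (hSIic hx)
          refine le_trans (measure_mono hsub) ?_
          rw [hνle]
          exact f3
        have hge1 : ENNReal.ofReal c ≤ ν (g ⁻¹' S) := by
          have hsub2 : {y | g y < a'} ⊆ g ⁻¹' S := fun x hx => hSIio hx
          exact le_trans f4 (le_trans (le_of_eq hνle) (measure_mono hsub2))
        exact le_antisymm hle1 hge1
    · -- a' ∉ S : S = Iio a', r = 0
      have hSeq : S = Iio a' := by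
        ext a
        simp only [mem_Iio]
        constructor
        · intro haS
          rcases lt_or_eq_of_le (mem_Iic.1 (hSIic haS)) with h | h
          · exact h
          · exact absurd (h ▸ haS) ha'S
        · exact fun h => f1 a h
      have hνltc2 : c ≤ νlt.toReal := by
        by_contra hcon
        push_neg at hcon
        exact ha'S hcon
      have hνeq : νlt.toReal = c := le_antisymm hνltc hνltc2
      have hr0 : r = 0 := by
        rw [hrdef, hνeq]
        simp [ENNReal.toReal_nonneg]
      have hU : (S \ A) ∪ (S ∩ Iio a' ∩ A) = Iio a' := by
        rw [hSeq]
        ext a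
        simp only [mem_union, mem_diff, mem_inter_iff, mem_Iio]
        constructor
        · rintro (⟨h, _⟩ | ⟨⟨h, _⟩, _⟩) <;> exact h
        · intro h
          by_cases hA2 : a ∈ A
          · exact Or.inr ⟨⟨h, h⟩, hA2⟩
          · exact Or.inl ⟨h, hA2⟩
      rw [hU, hr0, ENNReal.ofReal_zero, add_zero]
      rw [show ν (g ⁻¹' Iio a') = νlt from rfl, ← hνeq, ENNReal.ofReal_toReal (measure_ne_top _ _)]
  · -- unbounded case : S = univ
    have hSuniv : S = univ := by
      ext a
      simp only [mem_univ, iff_true, hSdef, mem_setOf_eq]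
      obtain ⟨y, hy, hay⟩ := not_bddAbove_iff.1 hbdd a
      exact lt_of_le_of_lt (hαmono hay.le) hy
    have hterm : ∀ a : A, ENNReal.ofReal
        (min (c - (ν {y | g y < (a : ℝ)}).toReal) (ν {y | g y = (a : ℝ)}).toReal)
        = ν {y | g y = (a : ℝ)} := by
      rintro ⟨a, ha⟩
      dsimp only
      have hS1 : (a + 1) ∈ S := hSuniv ▸ mem_univ _
      have hmsum : ν {y | g y < a} + ν {y | g y = a} ≤ ν {y | g y < a + 1} := by
        rw [← measure_union ?_ (hgeq a)]
        · apply measure_mono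
          rintro y (hy | hy) <;> simp only [mem_setOf_eq] at hy ⊢ <;> linarith [hy]
        · exact Set.disjoint_left.2 fun y hy hy' => (ne_of_lt hy) hy'
      have h2 : (ν {y | g y < a}).toReal + (ν {y | g y = a}).toReal ≤ c := by
        rw [← ENNReal.toReal_add (measure_ne_top _ _) (measure_ne_top _ _)]
        exact le_trans (ENNReal.toReal_mono (measure_ne_top _ _) hmsum) hS1.le
      rw [min_eq_right (by linarith), ENNReal.ofReal_toReal (measure_ne_top _ _)]
    rw [tsum_congr hterm]
    have h1 : ∑' a : A, ν {y | g y = (a : ℝ)} = ν (g ⁻¹' A) := by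
      have := hbi univ MeasurableSet.univ
      simp only [univ_inter] at this
      exact this.symm
    rw [h1, hSuniv]
    have hs2 : g ⁻¹' (univ \ A) = (g ⁻¹' A)ᶜ := by
      ext x
      simp
    rw [hs2]
    have hM : (ν univ).toReal ≤ c := by
      have hU : (⋃ n : ℕ, {y | g y < (n : ℝ)}) = univ := by
        ext x
        simp only [mem_iUnion, mem_setOf_eq, mem_univ, iff_true]
        exact exists_nat_gt (g x)
      have hle : ν univ ≤ ENNReal.ofReal c := by
        rw [← hU, Monotone.measure_iUnion]
        · refine iSup_le fun n => ?_
          have hn : ((n : ℝ)) ∈ S := hSuniv ▸ mem_univ _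
          exact le_of_lt ((ENNReal.lt_ofReal_iff_toReal_lt (measure_ne_top _ _)).2 hn)
        · intro m n hmn y hy
          simp only [mem_setOf_eq] at hy ⊢
          exact lt_of_lt_of_le hy (by exact_mod_cast Nat.cast_le.2 hmn)
      exact ENNReal.toReal_le_of_le_ofReal hc.le hle
    rw [min_eq_right hM, ENNReal.ofReal_toReal (measure_ne_top _ _)]
    rw [add_comm]
    exact measure_add_measure_compl (hg hAm)

lemma rnk_joint (μ : Measure X) [IsFiniteMeasure μ] {g u : X → ℝ}
    (hg : Measurable g) (hu : Measurable u) (hua : ∀ b : ℝ, μ {x | u x = b} = 0)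
    (t c : ℝ) (hcM : c ≤ (μ Set.univ).toReal) :
    μ ({x | rnk μ g u x < c} ∩ {x | t < g x}) = ENNReal.ofReal c - μ {x | g x ≤ t} := by
  classical
  set B : Set X := {x | t < g x} with hBdef
  have hBm : MeasurableSet B := hg measurableSet_Ioi
  have hBcm : MeasurableSet {x | g x ≤ t} := hg measurableSet_Iic
  set ν : Measure X := μ.restrict B with hνdef
  haveI : IsFiniteMeasure ν := inferInstance
  have hνap : ∀ {E : Set X}, MeasurableSet E → ν E = μ (E ∩ B) := fun hE =>
    Measure.restrict_apply hE
  have hνua : ∀ b : ℝ, ν {x | u x = b} = 0 := fun b =>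
    le_antisymm (le_trans (le_of_eq (hνap (hu (measurableSet_singleton b))))
      (le_trans (measure_mono Set.inter_subset_left) (le_of_eq (hua b)))) zero_le
  set br := (μ {x | g x ≤ t}).toReal with hbrdef
  -- pointwise relation on B
  have hpt : ∀ x ∈ B, rnk μ g u x = br + rnk ν g u x := by
    intro x hx
    have hxt : t < g x := hx
    have h1 : μ {y | g y < g x} = μ {y | g y ≤ t} + ν {y | g y < g x} := by
      rw [hνap (E := {y | g y < g x}) (hg measurableSet_Iio)]
      have hmset : MeasurableSet ({y | g y < g x} ∩ B) := (hg measurableSet_Iio).inter hBm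
      rw [← measure_union ?_ hmset]
      · congr 1
        ext y
        simp only [mem_union, mem_setOf_eq, mem_inter_iff, hBdef]
        constructor
        · intro hy
          rcases le_or_gt (g y) t with h | h
          · exact Or.inl h
          · exact Or.inr ⟨hy, h⟩
        · rintro (hy | ⟨hy, _⟩)
          · exact lt_of_le_of_lt hy hxt
          · exact hy
      · refine Set.disjoint_left.2 fun y hy hy' => ?_
        have ha : g y ≤ t := hy
        have hb : t < g y := hy'.2
        linarith
    have h2 : μ {y | g y = g x ∧ u y < u x} = ν {y | g y = g x ∧ u y < u x} := by
      rw [hνap (E := {y | g y = g x ∧ u y < u x})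
        (((hg (measurableSet_singleton _))).inter (hu measurableSet_Iio))]
      congr 1
      ext y
      simp only [mem_inter_iff, mem_setOf_eq, hBdef]
      constructor
      · intro hy
        exact ⟨hy, hy.1 ▸ hxt⟩
      · exact fun hy => hy.1
    rw [rnk, rnk, h1, h2, ENNReal.toReal_add (measure_ne_top _ _) (measure_ne_top _ _), hbrdef]
    ring
  -- set identification
  have hset : {x | rnk μ g u x < c} ∩ B = {x | rnk ν g u x < c - br} ∩ B := by
    ext x
    simp only [mem_inter_iff, mem_setOf_eq]
    constructor
    · rintro ⟨hr, hx⟩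
      refine ⟨?_, hx⟩
      have := hpt x hx
      rw [this] at hr
      linarith
    · rintro ⟨hr, hx⟩
      refine ⟨?_, hx⟩
      rw [hpt x hx]
      linarith
  have hEm : MeasurableSet {x | rnk ν g u x < c - br} :=
    (rnk_measurable ν hg hu) measurableSet_Iio
  have hνB : ν Set.univ = μ B := by
    rw [hνap MeasurableSet.univ, Set.univ_inter]
  have hMsplit : μ Set.univ = μ B + μ {x | g x ≤ t} := by
    rw [← measure_union ?_ hBcm]
    · congr 1
      ext x
      simp only [mem_union, mem_setOf_eq, mem_univ, true_iff, hBdef]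
      exact (lt_or_ge t (g x)).imp id id
    · refine Set.disjoint_left.2 fun x hx hx' => ?_
      have ha : t < g x := hx
      have hb : g x ≤ t := hx'
      linarith
  have hmin : min (c - br) (ν Set.univ).toReal = c - br := by
    apply min_eq_left
    have : (μ Set.univ).toReal = (μ B).toReal + br := by
      rw [hMsplit, ENNReal.toReal_add (measure_ne_top _ _) (measure_ne_top _ _)]
    rw [hνB]
    linarith
  calc μ ({x | rnk μ g u x < c} ∩ B) = μ ({x | rnk ν g u x < c - br} ∩ B) := by rw [hset]
    _ = ν {x | rnk ν g u x < c - br} := (hνap hEm).symm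
    _ = ENNReal.ofReal (min (c - br) (ν Set.univ).toReal) := rnk_uniform ν hg hu hνua _
    _ = ENNReal.ofReal (c - br) := by rw [hmin]
    _ = ENNReal.ofReal c - ENNReal.ofReal br := ENNReal.ofReal_sub c ENNReal.toReal_nonneg
    _ = ENNReal.ofReal c - μ {x | g x ≤ t} := by rw [hbrdef, ENNReal.ofReal_toReal (measure_ne_top _ _)]

-- no atom at 0

lemma rnk_zero_null (μ : Measure X) [IsFiniteMeasure μ] {g u : X → ℝ}
    (hg : Measurable g) (hu : Measurable u) (hua : ∀ b : ℝ, μ {x | u x = b} = 0) :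
    μ {x | rnk μ g u x = 0} = 0 := by
  have hb : ∀ n : ℕ, μ {x | rnk μ g u x = 0} ≤ ENNReal.ofReal (1/(n+1)) := by
    intro n
    calc μ {x | rnk μ g u x = 0} ≤ μ {x | rnk μ g u x < 1/(n+1)} := by
          apply measure_mono
          intro x hx
          have : rnk μ g u x = 0 := hx
          simp only [mem_setOf_eq, this]
          positivity
      _ = ENNReal.ofReal (min (1/(n+1)) (μ Set.univ).toReal) := rnk_uniform μ hg hu hua _
      _ ≤ ENNReal.ofReal (1/(n+1)) := ENNReal.ofReal_le_ofReal (min_le_left _ _)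
  have htend : Tendsto (fun n : ℕ => ENNReal.ofReal (1/(n+1) : ℝ)) atTop (𝓝 0) := by
    rw [show (0 : ℝ≥0∞) = ENNReal.ofReal 0 by simp]
    apply ENNReal.tendsto_ofReal
    exact tendsto_one_div_add_atTop_nhds_zero_nat
  have := ge_of_tendsto' htend (fun n => hb n)
  simpa using this

lemma layer_cake (μ : Measure X) [IsFiniteMeasure μ] {φ ψ : X → ℝ}
    (hφ : Measurable φ) (hψ : Measurable ψ) (hφ0 : 0 ≤ᵐ[μ] φ) (hψ0 : 0 ≤ᵐ[μ] ψ) :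
    ∫⁻ x, ENNReal.ofReal (φ x * ψ x) ∂μ
      = ∫⁻ p in Set.Ioi (0:ℝ) ×ˢ Set.Ioi (0:ℝ),
          μ ({x | p.1 < φ x} ∩ {x | p.2 < ψ x}) := by
  classical
  set W : Set (X × (ℝ × ℝ)) :=
    {q | 0 < q.2.1 ∧ q.2.1 < φ q.1 ∧ 0 < q.2.2 ∧ q.2.2 < ψ q.1} with hWdef
  have hWm : MeasurableSet W := by
    have h1 : MeasurableSet {q : X × (ℝ × ℝ) | 0 < q.2.1} :=
      measurableSet_lt measurable_const measurable_snd.fst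
    have h2 : MeasurableSet {q : X × (ℝ × ℝ) | q.2.1 < φ q.1} :=
      measurableSet_lt measurable_snd.fst (hφ.comp measurable_fst)
    have h3 : MeasurableSet {q : X × (ℝ × ℝ) | 0 < q.2.2} :=
      measurableSet_lt measurable_const measurable_snd.snd
    have h4 : MeasurableSet {q : X × (ℝ × ℝ) | q.2.2 < ψ q.1} :=
      measurableSet_lt measurable_snd.snd (hψ.comp measurable_fst)
    have : W = {q : X × (ℝ × ℝ) | 0 < q.2.1} ∩ {q | q.2.1 < φ q.1}
        ∩ ({q | 0 < q.2.2} ∩ {q | q.2.2 < ψ q.1}) := by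
      ext q
      simp only [hWdef, mem_inter_iff, mem_setOf_eq]
      tauto
    rw [this]
    exact ((h1.inter h2).inter (h3.inter h4))
  have step1 : ∀ᵐ x ∂μ, ENNReal.ofReal (φ x * ψ x)
      = ∫⁻ p, W.indicator (1 : X × (ℝ × ℝ) → ℝ≥0∞) (x, p) ∂(volume : Measure (ℝ × ℝ)) := by
    filter_upwards [hφ0, hψ0] with x h1 h2
    have hsec : (fun p : ℝ × ℝ => W.indicator (1 : X × (ℝ × ℝ) → ℝ≥0∞) (x, p))
        = (Ioo (0:ℝ) (φ x) ×ˢ Ioo (0:ℝ) (ψ x)).indicator (1 : ℝ × ℝ → ℝ≥0∞) := by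
      funext p
      by_cases hp : p ∈ Ioo (0:ℝ) (φ x) ×ˢ Ioo (0:ℝ) (ψ x)
      · obtain ⟨⟨ha, hb⟩, hc, hd⟩ := hp
        rw [Set.indicator_of_mem (show (x, p) ∈ W from ⟨ha, hb, hc, hd⟩),
          Set.indicator_of_mem (show p ∈ Ioo (0:ℝ) (φ x) ×ˢ Ioo (0:ℝ) (ψ x) from ⟨⟨ha, hb⟩, hc, hd⟩)]
        rfl
      · rw [Set.indicator_of_notMem hp]
        apply Set.indicator_of_notMem
        intro hmem
        obtain ⟨ha, hb, hc, hd⟩ := hmem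
        exact hp ⟨⟨ha, hb⟩, hc, hd⟩
    rw [hsec, lintegral_indicator_one (measurableSet_Ioo.prod measurableSet_Ioo),
      Measure.volume_eq_prod, Measure.prod_prod, Real.volume_Ioo, Real.volume_Ioo,
      sub_zero, sub_zero, ← ENNReal.ofReal_mul h1]
  rw [lintegral_congr_ae step1]
  rw [lintegral_lintegral_swap]
  swap
  · exact (measurable_one.indicator hWm).aemeasurable
  have step4 : ∀ p : ℝ × ℝ, ∫⁻ x, W.indicator (1 : X × (ℝ × ℝ) → ℝ≥0∞) (x, p) ∂μ
      = (Set.Ioi (0:ℝ) ×ˢ Set.Ioi (0:ℝ)).indicator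
          (fun p : ℝ × ℝ => μ ({x | p.1 < φ x} ∩ {x | p.2 < ψ x})) p := by
    intro p
    by_cases hp : p ∈ Set.Ioi (0:ℝ) ×ˢ Set.Ioi (0:ℝ)
    · rw [Set.indicator_of_mem hp]
      obtain ⟨hp1, hp2⟩ := hp
      have hsec : (fun x => W.indicator (1 : X × (ℝ × ℝ) → ℝ≥0∞) (x, p))
          = ({x | p.1 < φ x} ∩ {x | p.2 < ψ x}).indicator (1 : X → ℝ≥0∞) := by
        funext x
        by_cases hx : x ∈ {x | p.1 < φ x} ∩ {x | p.2 < ψ x}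
        · rw [Set.indicator_of_mem hx,
            Set.indicator_of_mem (show (x, p) ∈ W from ⟨hp1, hx.1, hp2, hx.2⟩)]
          rfl
        · rw [Set.indicator_of_notMem hx, Set.indicator_of_notMem]
          intro hmem
          exact hx ⟨hmem.2.1, hmem.2.2.2⟩
      have hsetm : MeasurableSet ({x | p.1 < φ x} ∩ {x | p.2 < ψ x}) :=
        (hφ measurableSet_Ioi).inter (hψ measurableSet_Ioi)
      rw [hsec, lintegral_indicator_one hsetm]
    · rw [Set.indicator_of_notMem hp]
      have hsec : (fun x => W.indicator (1 : X × (ℝ × ℝ) → ℝ≥0∞) (x, p)) = fun _ => 0 := by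
        funext x
        apply Set.indicator_of_notMem
        intro hmem
        exact hp ⟨hmem.1, hmem.2.2.1⟩
      rw [hsec, lintegral_zero]
  rw [lintegral_congr step4]
  rw [lintegral_indicator (measurableSet_Ioi.prod measurableSet_Ioi)]

lemma burton_main (μ : Measure X) [IsFiniteMeasure μ] (f g u : X → ℝ)
    (hfm : Measurable f) (hgm : Measurable g) (hum : Measurable u)
    (hua : ∀ b : ℝ, μ {x | u x = b} = 0)
    (hf2 : ∫⁻ x, ENNReal.ofReal (f x * f x) ∂μ ≠ ⊤)
    (hg2 : ∫⁻ x, ENNReal.ofReal (g x * g x) ∂μ ≠ ⊤)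
    (hf0 : 0 ≤ᵐ[μ] f) (hg0 : 0 ≤ᵐ[μ] g) :
    ∃ ft : X → ℝ, Measurable ft ∧ (∀ α : ℝ, μ {x | α < ft x} = μ {x | α < f x}) ∧
      ∀ h : X → ℝ, Measurable h → (∀ α : ℝ, μ {x | α < h x} = μ {x | α < f x}) →
        ∫ x, ft x * g x ∂μ ≤ ∫ x, h x * g x ∂μ := by
  classical
  set σ : X → ℝ := rnk μ g u with hσdef
  have hσm : Measurable σ := rnk_measurable μ hgm hum
  have hσnn : ∀ x, 0 ≤ σ x := rnk_nonneg μ g u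
  have hσ0 : μ {x | σ x = 0} = 0 := rnk_zero_null μ hgm hum hua
  set Fr : ℝ → ℝ := fun s => (μ {x | s < f x}).toReal with hFrdef
  have hFrnn : ∀ s, 0 ≤ Fr s := fun s => ENNReal.toReal_nonneg
  have hFrM : ∀ s, Fr s ≤ (μ Set.univ).toReal := fun s =>
    ENNReal.toReal_mono (measure_ne_top _ _) (measure_mono (subset_univ _))
  have hFranti : Antitone Fr := fun s s' hss' =>
    ENNReal.toReal_mono (measure_ne_top _ _) (measure_mono fun x hx => lt_of_le_of_lt hss' hx)
  set q : ℝ → ℝ := fun t => sInf {s | 0 ≤ s ∧ Fr s ≤ t} with hqdef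
  have hqnn : ∀ t, 0 ≤ q t := fun t => Real.sInf_nonneg (fun s hs => hs.1)
  -- nonemptiness of the quantile sets for t > 0
  have hqne : ∀ t : ℝ, 0 < t → ∃ s : ℝ, 0 ≤ s ∧ Fr s ≤ t := by
    intro t ht
    have hI : (⋂ n : ℕ, {x | (n : ℝ) < f x}) = ∅ := by
      ext x
      simp only [mem_iInter, mem_setOf_eq, mem_empty_iff_false, iff_false, not_forall, not_lt]
      obtain ⟨n, hn⟩ := exists_nat_gt (f x)
      exact ⟨n, hn.le⟩
    have h0 : Tendsto (fun n : ℕ => μ {x | (n : ℝ) < f x}) atTop (𝓝 0) := by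
      have := tendsto_measure_iInter_atTop (μ := μ) (s := fun n : ℕ => {x | (n : ℝ) < f x})
        (fun n => (hfm measurableSet_Ioi).nullMeasurableSet)
        (fun m n hmn => fun x hx => lt_of_le_of_lt (by exact_mod_cast hmn : (m:ℝ) ≤ n) hx)
        ⟨0, measure_ne_top μ _⟩
      rwa [hI, measure_empty] at this
    obtain ⟨n, hn⟩ := (h0.eventually_lt_const (ENNReal.ofReal_pos.2 ht)).exists
    exact ⟨(n : ℝ), Nat.cast_nonneg n,
      (ENNReal.lt_ofReal_iff_toReal_lt (measure_ne_top _ _)).1 hn |>.le⟩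
  -- key iff for the quantile
  have hqiff : ∀ t : ℝ, 0 < t → ∀ s : ℝ, 0 ≤ s → (s < q t ↔ t < Fr s) := by
    intro t ht s hs
    constructor
    · intro hlt
      by_contra hcon
      push_neg at hcon
      have hbb : BddBelow {s | 0 ≤ s ∧ Fr s ≤ t} := ⟨0, fun y hy => hy.1⟩
      exact absurd (csInf_le hbb ⟨hs, hcon⟩) (not_le.2 hlt)
    · intro hFst
      -- right continuity: find n with t < Fr (s + 1/(n+1))
      have hU : (⋃ n : ℕ, {x | s + 1/(n+1) < f x}) = {x | s < f x} := by
        ext x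
        simp only [mem_iUnion, mem_setOf_eq]
        constructor
        · rintro ⟨n, hn⟩
          have : (0:ℝ) < 1/(n+1) := by positivity
          linarith
        · intro hx
          obtain ⟨n, hn⟩ := exists_nat_one_div_lt (by linarith : (0:ℝ) < f x - s)
          exact ⟨n, by push_cast at hn ⊢; linarith⟩
      have hmono : Monotone fun n : ℕ => {x | s + 1/(n+1) < f x} := by
        intro m n hmn x hx
        have h1 : (1:ℝ)/(n+1) ≤ 1/(m+1) := by
          apply one_div_le_one_div_of_le (by positivity)
          exact_mod_cast by omega
        simp only [mem_setOf_eq] at hx ⊢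
        linarith
      have hsup : μ {x | s < f x} = ⨆ n : ℕ, μ {x | s + 1/(n+1) < f x} := by
        rw [← hU, Monotone.measure_iUnion hmono]
      have htlt : ENNReal.ofReal t < μ {x | s < f x} := by
        apply (ENNReal.ofReal_lt_iff_lt_toReal (le_of_lt ht) (measure_ne_top _ _)).2
        exact hFst
      rw [hsup] at htlt
      obtain ⟨n, hn⟩ := lt_iSup_iff.1 htlt
      have hFrn : t < Fr (s + 1/(n+1)) :=
        (ENNReal.ofReal_lt_iff_lt_toReal (le_of_lt ht) (measure_ne_top _ _)).1 hn
      have hlb : ∀ s' ∈ {s' | 0 ≤ s' ∧ Fr s' ≤ t}, s + 1/(n+1) ≤ s' := by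
        intro s' hs'
        by_contra hcon
        push_neg at hcon
        have := hFranti hcon.le
        have := hs'.2
        linarith
      have : s + 1/(n+1) ≤ q t := by
        obtain ⟨s0, hs0⟩ := hqne t ht
        exact le_csInf ⟨s0, hs0⟩ hlb
      have hpos : (0:ℝ) < 1/(n+1) := by positivity
      linarith
  set ft : X → ℝ := fun x => q (σ x) with hftdef
  have hftnn : ∀ x, 0 ≤ ft x := fun x => hqnn _
  -- measurability of ft
  have hftm : Measurable ft := by
    apply measurable_of_Ioi
    intro s
    by_cases hs : 0 ≤ s
    · have hpre : ft ⁻¹' Ioi s = ({x | σ x < Fr s} ∩ {x | 0 < σ x})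
          ∪ ({x | σ x = 0} ∩ (if s < q 0 then univ else ∅)) := by
        ext x
        simp only [mem_preimage, mem_Ioi, mem_union, mem_inter_iff, mem_setOf_eq]
        rcases eq_or_lt_of_le (hσnn x) with hσx | hσx
        · constructor
          · intro hx
            refine Or.inr ⟨hσx.symm, ?_⟩
            have hxq : s < q (σ x) := hx
            rw [← hσx] at hxq
            rw [if_pos hxq]
            trivial
          · rintro (⟨_, hpos⟩ | ⟨hz, hmem⟩)
            · exact absurd hpos (by rw [← hσx]; exact lt_irrefl 0)
            · by_cases hq0 : s < q 0
              · show s < q (σ x)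
                rw [hz]
                exact hq0
              · rw [if_neg hq0] at hmem
                exact absurd hmem (notMem_empty x)
        · constructor
          · intro hx
            exact Or.inl ⟨((hqiff (σ x) hσx s hs).1 hx : Fr s > σ x), hσx⟩
          · rintro (⟨hlt, hpos⟩ | ⟨hz, _⟩)
            · exact (hqiff (σ x) hσx s hs).2 hlt
            · exact absurd hz (ne_of_gt hσx)
      rw [hpre]
      refine ((hσm measurableSet_Iio).inter (hσm measurableSet_Ioi)).union
        ((hσm (measurableSet_singleton 0)).inter ?_)
      by_cases hq0 : s < q 0
      · rw [if_pos hq0]; exact MeasurableSet.univ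
      · rw [if_neg hq0]; exact MeasurableSet.empty
    · have hpre : ft ⁻¹' Ioi s = univ := by
        ext x
        simp only [mem_preimage, mem_Ioi, mem_univ, iff_true]
        have := hftnn x
        linarith
      rw [hpre]
      exact MeasurableSet.univ
  -- a.e. identification of upper level sets
  have hae : ∀ s : ℝ, 0 ≤ s → {x | s < ft x} =ᵐ[μ] {x | σ x < Fr s} := by
    intro s hs
    rw [Filter.eventuallyEq_set]
    have hns : ∀ᵐ x ∂μ, x ∉ {x | σ x = 0} := measure_eq_zero_iff_ae_notMem.1 hσ0
    filter_upwards [hns] with x hx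
    have hσpos : 0 < σ x := lt_of_le_of_ne (hσnn x) (fun hc => hx hc.symm)
    show s < q (σ x) ↔ σ x < Fr s
    exact hqiff (σ x) hσpos s hs
  -- distribution of ft
  have hdist : ∀ α : ℝ, μ {x | α < ft x} = μ {x | α < f x} := by
    intro α
    by_cases hα : 0 ≤ α
    · rw [measure_congr (hae α hα), hσdef, rnk_uniform μ hgm hum hua,
        min_eq_left (hFrM α), hFrdef, ENNReal.ofReal_toReal (measure_ne_top _ _)]
    · push_neg at hα
      have h1 : {x | α < ft x} = univ := by
        ext x
        simp only [mem_setOf_eq, mem_univ, iff_true]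
        exact lt_of_lt_of_le hα (hftnn x)
      have h2 : μ {x | α < f x} = μ univ := by
        apply measure_congr
        rw [ae_eq_univ]
        have hsub : {x | α < f x}ᶜ ⊆ {x | ¬ 0 ≤ f x} := by
          intro x hx
          simp only [mem_compl_iff, mem_setOf_eq, not_lt] at hx
          simp only [mem_setOf_eq, not_le]
          linarith
        have hf0' : ∀ᵐ x ∂μ, (0:ℝ) ≤ f x := hf0
        exact measure_mono_null hsub (ae_iff.1 hf0')
      rw [h1, h2]
  -- joint distribution of (ft, g)
  have hjoint : ∀ s : ℝ, 0 ≤ s → ∀ t : ℝ,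
      μ ({x | s < ft x} ∩ {x | t < g x}) = μ {x | s < f x} - μ {x | g x ≤ t} := by
    intro s hs t
    have h1 : ({x | s < ft x} ∩ {x | t < g x} : Set X)
        =ᵐ[μ] ({x | σ x < Fr s} ∩ {x | t < g x} : Set X) := by
      have := hae s hs
      rw [Filter.eventuallyEq_set] at this ⊢
      filter_upwards [this] with x hx
      simp only [mem_inter_iff]
      exact and_congr hx Iff.rfl
    rw [measure_congr h1, hσdef, rnk_joint μ hgm hum hua t (Fr s) (hFrM s),
      hFrdef, ENNReal.ofReal_toReal (measure_ne_top _ _)]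
  refine ⟨ft, hftm, hdist, ?_⟩
  intro h hm hdisth
  -- h is a.e. nonnegative
  have hf_le_null : ∀ α : ℝ, α < 0 → μ {x | f x ≤ α} = 0 := by
    intro α hα
    have hf0' : ∀ᵐ x ∂μ, (0:ℝ) ≤ f x := hf0
    refine measure_mono_null (fun x hx => ?_) (ae_iff.1 hf0')
    have h1 : f x ≤ α := hx
    show ¬ (0:ℝ) ≤ f x
    push_neg
    linarith
  have hh_le_null : ∀ α : ℝ, α < 0 → μ {x | h x ≤ α} = 0 := by
    intro α hα
    have hcomp : ∀ (φ : X → ℝ), Measurable φ → μ {x | φ x ≤ α} + μ {x | α < φ x} = μ univ := by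
      intro φ hφ
      have hmset : MeasurableSet {x | α < φ x} := hφ measurableSet_Ioi
      rw [← measure_union ?_ hmset]
      · congr 1
        ext x
        simp only [mem_union, mem_setOf_eq, mem_univ, iff_true]
        exact le_or_gt (φ x) α
      · refine Set.disjoint_left.2 fun x hx hx' => ?_
        have h1 : φ x ≤ α := hx
        have h2 : α < φ x := hx'
        linarith
    have e1 := hcomp h hm
    have e2 := hcomp f hfm
    rw [hdisth α] at e1
    rw [hf_le_null α hα, zero_add] at e2
    rw [e2] at e1
    have e3 : μ {x | h x ≤ α} + μ univ = 0 + μ univ := by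
      rw [zero_add]
      exact e1
    exact (ENNReal.add_left_inj (measure_ne_top μ _)).1 e3
  have hh0 : 0 ≤ᵐ[μ] h := by
    have hneg : ∀ n : ℕ, (-(1/(n+1) : ℝ)) < 0 := by
      intro n
      have : (0:ℝ) < 1/(n+1) := by positivity
      linarith
    have hnull : μ {x | ¬ (0:ℝ) ≤ h x} = 0 := by
      have hU : {x | ¬ (0:ℝ) ≤ h x} = ⋃ n : ℕ, {x | h x ≤ -(1/(n+1))} := by
        ext x
        simp only [mem_setOf_eq, not_le, mem_iUnion]
        constructor
        · intro hx
          obtain ⟨n, hn⟩ := exists_nat_one_div_lt (by linarith : (0:ℝ) < -(h x))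
          exact ⟨n, by push_cast at hn ⊢; linarith⟩
        · rintro ⟨n, hn⟩
          have : (0:ℝ) < 1/(n+1) := by positivity
          linarith
      rw [hU]
      exact measure_iUnion_null fun n : ℕ => hh_le_null (-(1/(n+1))) (hneg n)
    exact (ae_iff.2 hnull : ∀ᵐ x ∂μ, (0:ℝ) ≤ h x)
  -- square integrability of h via equimeasurability
  have hsq : ∫⁻ x, ENNReal.ofReal (h x * h x) ∂μ = ∫⁻ x, ENNReal.ofReal (f x * f x) ∂μ := by
    rw [layer_cake μ hm hm hh0 hh0, layer_cake μ hfm hfm hf0 hf0]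
    apply lintegral_congr
    intro p
    have e1 : {x | p.1 < h x} ∩ {x | p.2 < h x} = {x | max p.1 p.2 < h x} := by
      ext x
      simp only [mem_inter_iff, mem_setOf_eq, max_lt_iff]
    have e2 : {x | p.1 < f x} ∩ {x | p.2 < f x} = {x | max p.1 p.2 < f x} := by
      ext x
      simp only [mem_inter_iff, mem_setOf_eq, max_lt_iff]
    rw [e1, e2, hdisth]
  have hprod_le : ∀ a b : ℝ,
      ENNReal.ofReal (a * b) ≤ ENNReal.ofReal (a * a) + ENNReal.ofReal (b * b) := by
    intro a b
    rcases le_or_gt (a * b) 0 with hab | hab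
    · rw [ENNReal.ofReal_of_nonpos hab]
      exact zero_le
    · calc ENNReal.ofReal (a * b) ≤ ENNReal.ofReal (a * a + b * b) :=
            ENNReal.ofReal_le_ofReal (by nlinarith)
        _ = _ := ENNReal.ofReal_add (mul_self_nonneg a) (mul_self_nonneg b)
  have hhg_fin : ∫⁻ x, ENNReal.ofReal (h x * g x) ∂μ ≠ ⊤ := by
    have hle : ∫⁻ x, ENNReal.ofReal (h x * g x) ∂μ
        ≤ ∫⁻ x, (ENNReal.ofReal (h x * h x) + ENNReal.ofReal (g x * g x)) ∂μ :=
      lintegral_mono fun x => hprod_le _ _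
    have hadd : ∫⁻ x, (ENNReal.ofReal (h x * h x) + ENNReal.ofReal (g x * g x)) ∂μ
        = ∫⁻ x, ENNReal.ofReal (h x * h x) ∂μ + ∫⁻ x, ENNReal.ofReal (g x * g x) ∂μ :=
      lintegral_add_left (ENNReal.measurable_ofReal.comp (hm.mul hm)) _
    refine ne_of_lt (lt_of_le_of_lt hle ?_)
    rw [hadd, hsq]
    exact ENNReal.add_lt_top.2 ⟨lt_top_iff_ne_top.2 hf2, lt_top_iff_ne_top.2 hg2⟩
  set Q : Set (ℝ × ℝ) := Set.Ioi (0:ℝ) ×ˢ Set.Ioi (0:ℝ) with hQdef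
  have hQm : MeasurableSet Q := measurableSet_Ioi.prod measurableSet_Ioi
  have hft0ae : 0 ≤ᵐ[μ] ft := Filter.Eventually.of_forall hftnn
  have hLft : ∫⁻ x, ENNReal.ofReal (ft x * g x) ∂μ
      = ∫⁻ p in Q, (μ {x | p.1 < f x} - μ {x | g x ≤ p.2}) := by
    rw [layer_cake μ hftm hgm hft0ae hg0]
    apply setLIntegral_congr_fun hQm
    intro p hp
    exact hjoint p.1 (le_of_lt hp.1) p.2
  have hLh : ∫⁻ x, ENNReal.ofReal (h x * g x) ∂μ
      = ∫⁻ p in Q, μ ({x | p.1 < h x} ∩ {x | p.2 < g x}) :=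
    layer_cake μ hm hgm hh0 hg0
  have hmono : (∫⁻ p in Q, (μ {x | p.1 < f x} - μ {x | g x ≤ p.2}))
      ≤ ∫⁻ p in Q, μ ({x | p.1 < h x} ∩ {x | p.2 < g x}) := by
    apply lintegral_mono_ae
    rw [ae_restrict_iff' hQm]
    apply Filter.Eventually.of_forall
    intro p hp
    rw [tsub_le_iff_right, ← hdisth p.1]
    refine le_trans (measure_mono ?_) (measure_union_le _ _)
    intro x hx
    rcases le_or_gt (g x) p.2 with hgx | hgx
    · exact Or.inr hgx
    · exact Or.inl ⟨hx, hgx⟩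
  have hnn_ft : 0 ≤ᵐ[μ] fun x => ft x * g x := by
    filter_upwards [hg0] with x hgx
    exact mul_nonneg (hftnn x) hgx
  have hnn_h : 0 ≤ᵐ[μ] fun x => h x * g x := by
    filter_upwards [hh0, hg0] with x h1 h2
    exact mul_nonneg h1 h2
  rw [integral_eq_lintegral_of_nonneg_ae hnn_ft ((hftm.mul hgm).aestronglyMeasurable),
    integral_eq_lintegral_of_nonneg_ae hnn_h ((hm.mul hgm).aestronglyMeasurable)]
  apply ENNReal.toReal_mono hhg_fin
  rw [hLft, hLh]
  exact hmono

theorem stmt_3 (d : ℕ) (D : Set (EuclideanSpace ℝ (Fin d)))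
    (hDo : IsOpen D) (hDb : Bornology.IsBounded D)
    (f g : EuclideanSpace ℝ (Fin d) → ℝ)
    (hfm : Measurable f) (hgm : Measurable g)
    (hf2 : MemLp f 2 (volume.restrict D)) (hg2 : MemLp g 2 (volume.restrict D))
    (hf0 : 0 ≤ᵐ[volume.restrict D] f) (hg0 : 0 ≤ᵐ[volume.restrict D] g) :
    ∃ ftilde : EuclideanSpace ℝ (Fin d) → ℝ, Measurable ftilde ∧
      (∀ α : ℝ, volume.restrict D {x | α < ftilde x} = volume.restrict D {x | α < f x}) ∧
      ∀ h : EuclideanSpace ℝ (Fin d) → ℝ, Measurable h →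
        (∀ α : ℝ, volume.restrict D {x | α < h x} = volume.restrict D {x | α < f x}) →
        ∫ x, ftilde x * g x ∂(volume.restrict D) ≤ ∫ x, h x * g x ∂(volume.restrict D) := by
  classical
  haveI hfin : IsFiniteMeasure (volume.restrict D) :=
    ⟨by rw [Measure.restrict_apply_univ]; exact hDb.measure_lt_top⟩
  rcases Nat.eq_zero_or_pos d with hd0 | hd
  · -- dimension zero : the space is a single point
    subst hd0
    refine ⟨f, hfm, fun α => rfl, ?_⟩
    intro h hm hdist
    have hpt : ∀ x y : EuclideanSpace ℝ (Fin 0), x = y := fun x y =>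
      by ext i; exact i.elim0
    by_cases hμ : volume.restrict D Set.univ = 0
    · have h0 : (volume.restrict D : Measure (EuclideanSpace ℝ (Fin 0))) = 0 :=
        Measure.measure_univ_eq_zero.1 hμ
      rw [h0]
      simp
    · have x₀ : EuclideanSpace ℝ (Fin 0) := 0
      have hempty : ∀ P : EuclideanSpace ℝ (Fin 0) → Prop, ¬ P x₀ → {x | P x} = (∅ : Set _) := by
        intro P hP
        ext x
        simp only [mem_setOf_eq, mem_empty_iff_false, iff_false]
        rw [hpt x x₀]
        exact hP
      have huniv : ∀ P : EuclideanSpace ℝ (Fin 0) → Prop, P x₀ → {x | P x} = (univ : Set _) := by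
        intro P hP
        ext x
        simp only [mem_setOf_eq, mem_univ, iff_true]
        rw [hpt x x₀]
        exact hP
      have h1 : h x₀ ≤ f x₀ := by
        by_contra hc
        push_neg at hc
        have hd1 := hdist (f x₀)
        rw [huniv (fun x => f x₀ < h x) hc,
          hempty (fun x => f x₀ < f x) (lt_irrefl (f x₀)), measure_empty] at hd1
        exact hμ hd1
      have h2 : f x₀ ≤ h x₀ := by
        by_contra hc
        push_neg at hc
        have hd1 := (hdist (h x₀)).symm
        rw [huniv (fun x => h x₀ < f x) hc,
          hempty (fun x => h x₀ < h x) (lt_irrefl (h x₀)), measure_empty] at hd1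
        exact hμ hd1
      have hfh : h = f := funext fun x => by
        rw [hpt x x₀]
        linarith
      rw [hfh]
  · -- positive dimension
    haveI : Nonempty (Fin d) := ⟨⟨0, hd⟩⟩
    haveI hnt : Nontrivial (EuclideanSpace ℝ (Fin d)) := by
      refine ⟨(0 : EuclideanSpace ℝ (Fin d)), (WithLp.toLp 2 (fun _ => 1) : EuclideanSpace ℝ (Fin d)), ?_⟩
      intro hc
      have := congrArg (fun v : EuclideanSpace ℝ (Fin d) => v ⟨0, hd⟩) hc
      norm_num at this
    haveI : NullSingletonClass (volume : Measure (EuclideanSpace ℝ (Fin d))) := inferInstance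
    obtain ⟨u, hue⟩ := exists_measurableEmbedding_real (EuclideanSpace ℝ (Fin d))
    have hua : ∀ b : ℝ, volume.restrict D {x | u x = b} = 0 := by
      intro b
      have hsub : ({x | u x = b} : Set (EuclideanSpace ℝ (Fin d))).Subsingleton := by
        intro x hx y hy
        exact hue.injective ((hx : u x = b).trans (hy : u y = b).symm)
      have h0 : (volume : Measure (EuclideanSpace ℝ (Fin d))) {x | u x = b} = 0 :=
        hsub.measure_zero _
      have hmset : MeasurableSet {x | u x = b} := hue.measurable (measurableSet_singleton b)
      rw [Measure.restrict_apply hmset]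
      exact measure_mono_null inter_subset_left h0
    have sqfin : ∀ φ : EuclideanSpace ℝ (Fin d) → ℝ, MemLp φ 2 (volume.restrict D) →
        ∫⁻ x, ENNReal.ofReal (φ x * φ x) ∂(volume.restrict D) ≠ ⊤ := by
      intro φ hφ
      have hint := hφ.integrable_sq
      have hfin := hint.2
      rw [hasFiniteIntegral_iff_norm] at hfin
      refine ne_of_lt (lt_of_le_of_lt ?_ hfin)
      apply lintegral_mono
      intro x
      apply ENNReal.ofReal_le_ofReal
      rw [sq]
      exact le_abs_self _
    exact burton_main (volume.restrict D) f g u hfm hgm hue.measurable hua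
      (sqfin f hf2) (sqfin g hg2) hf0 hg0
end

section
/- Let D ⊆ ℝ^d be a bounded open set with Lebesgue measure λ, let v ∈ L²(D,λ), and let 0 < c < λ(D). Suppose A ⊆ D is a measurable set with λ(A) = c such that ∫_A v dλ ≤ ∫_D h v dλ for every h ∈ S(c) = {h ∈ L²(D,λ) : 0 ≤ h ≤ 1 λ-a.e. and ∫_D h dλ = c}. Then the essential supremum of v over A is at most the essential infimum of v over D \ A. -/
open MeasureTheory

set_option maxHeartbeats 1000000 in
theorem stmt_5 (d : ℕ) (D : Set (EuclideanSpace ℝ (Fin d)))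
    (hDo : IsOpen D) (hDb : Bornology.IsBounded D)
    (v : Lp ℝ 2 (volume.restrict D))
    (c : ℝ) (hc0 : 0 < c) (hc1 : ENNReal.ofReal c < volume D)
    (S : Set (Lp ℝ 2 (volume.restrict D)))
    (hS : S = {h | (∀ᵐ x ∂(volume.restrict D), 0 ≤ h x ∧ h x ≤ 1) ∧
      ∫ x, h x ∂(volume.restrict D) = c})
    (A : Set (EuclideanSpace ℝ (Fin d))) (hAm : MeasurableSet A) (hAD : A ⊆ D)
    (hAc : volume A = ENNReal.ofReal c)
    (hmin : ∀ h ∈ S, ∫ x in A, v x ∂(volume.restrict D) ≤ ∫ x, h x * v x ∂(volume.restrict D)) :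
    essSup (fun x => v x) ((volume.restrict D).restrict A) ≤
      essInf (fun x => v x) ((volume.restrict D).restrict (D \ A)) := by
  classical
  have hVD : volume D < ⊤ := hDb.measure_lt_top
  haveI hμfin : IsFiniteMeasure (volume.restrict D) := by
    constructor
    simpa [Measure.restrict_apply_univ] using hVD
  have hvm : Measurable (fun x => v x) := (Lp.stronglyMeasurable v).measurable
  have hvint : Integrable (fun x => v x) (volume.restrict D) := (Lp.memLp v).integrable (by norm_num)
  have hμA : (volume.restrict D) A = ENNReal.ofReal c := by
    rw [Measure.restrict_apply hAm, Set.inter_eq_left.mpr hAD, hAc]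
  have hμAne : (volume.restrict D) A ≠ ⊤ := by simp [hμA]
  -- Key claim
  have key : ∀ s t : ℝ, s < t →
      (volume.restrict D) (A ∩ {x | t < v x}) = 0 ∨
        (volume.restrict D) ((D \ A) ∩ {x | v x < s}) = 0 := by
    intro s t hst
    by_contra hcon
    push_neg at hcon
    obtain ⟨hA1, hB1⟩ := hcon
    set A₁ := A ∩ {x | t < v x} with hA₁def
    set B₁ := (D \ A) ∩ {x | v x < s} with hB₁def
    have hA₁m : MeasurableSet A₁ := hAm.inter (measurableSet_lt measurable_const hvm)
    have hB₁m : MeasurableSet B₁ :=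
      (hDo.measurableSet.diff hAm).inter (measurableSet_lt hvm measurable_const)
    have hA₁fin : (volume.restrict D) A₁ ≠ ⊤ := (measure_lt_top (volume.restrict D) A₁).ne
    have hB₁fin : (volume.restrict D) B₁ ≠ ⊤ := (measure_lt_top (volume.restrict D) B₁).ne
    set a := ((volume.restrict D) A₁).toReal with hadef
    set b := ((volume.restrict D) B₁).toReal with hbdef
    have ha : 0 < a := ENNReal.toReal_pos hA1 hA₁fin
    have hb : 0 < b := ENNReal.toReal_pos hB1 hB₁fin
    set m := min a b with hmdef
    have hm : 0 < m := lt_min ha hb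
    set α := m / a with hαdef
    set β := m / b with hβdef
    have hα0 : 0 < α := div_pos hm ha
    have hβ0 : 0 < β := div_pos hm hb
    have hα1 : α ≤ 1 := by rw [hαdef, div_le_one ha]; exact min_le_left a b
    have hβ1 : β ≤ 1 := by rw [hβdef, div_le_one hb]; exact min_le_right a b
    have hαa : α * a = m := div_mul_cancel₀ m ha.ne'
    have hβb : β * b = m := div_mul_cancel₀ m hb.ne'
    set h : Lp ℝ 2 (volume.restrict D) :=
      (indicatorConstLp 2 hAm hμAne (1:ℝ)
        + (-α) • indicatorConstLp 2 hA₁m hA₁fin (1:ℝ))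
        + β • indicatorConstLp 2 hB₁m hB₁fin (1:ℝ) with hhdef
    have hcoe : ∀ᵐ x ∂(volume.restrict D), h x = A.indicator (fun _ => (1:ℝ)) x
        + (-α) * A₁.indicator (fun _ => (1:ℝ)) x + β * B₁.indicator (fun _ => (1:ℝ)) x := by
      filter_upwards [Lp.coeFn_add (indicatorConstLp 2 hAm hμAne (1:ℝ)
          + (-α) • indicatorConstLp 2 hA₁m hA₁fin (1:ℝ))
          (β • indicatorConstLp 2 hB₁m hB₁fin (1:ℝ)),
        Lp.coeFn_add (indicatorConstLp 2 hAm hμAne (1:ℝ))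
          ((-α) • indicatorConstLp 2 hA₁m hA₁fin (1:ℝ)),
        Lp.coeFn_smul (-α) (indicatorConstLp 2 hA₁m hA₁fin (1:ℝ)),
        Lp.coeFn_smul β (indicatorConstLp 2 hB₁m hB₁fin (1:ℝ)),
        indicatorConstLp_coeFn (hs := hAm) (hμs := hμAne) (c := (1:ℝ)),
        indicatorConstLp_coeFn (hs := hA₁m) (hμs := hA₁fin) (c := (1:ℝ)),
        indicatorConstLp_coeFn (hs := hB₁m) (hμs := hB₁fin) (c := (1:ℝ))]
        with x h1 h2 h3 h4 h5 h6 h7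
      rw [hhdef, h1, Pi.add_apply, h2, Pi.add_apply, h3, Pi.smul_apply, h4, Pi.smul_apply,
        h5, h6, h7]
      simp [smul_eq_mul]
    have hbdd : ∀ᵐ x ∂(volume.restrict D), 0 ≤ h x ∧ h x ≤ 1 := by
      filter_upwards [hcoe] with x hx
      rw [hx]
      by_cases hxA : x ∈ A
      · have hxB : x ∉ B₁ := fun hh => hh.1.2 hxA
        by_cases hxA1 : x ∈ A₁
        · simp only [Set.indicator_of_mem hxA, Set.indicator_of_mem hxA1,
            Set.indicator_of_notMem hxB]
          constructor <;> nlinarith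
        · simp only [Set.indicator_of_mem hxA, Set.indicator_of_notMem hxA1,
            Set.indicator_of_notMem hxB]
          norm_num
      · have hxA1 : x ∉ A₁ := fun hh => hxA hh.1
        by_cases hxB : x ∈ B₁
        · simp only [Set.indicator_of_notMem hxA, Set.indicator_of_notMem hxA1,
            Set.indicator_of_mem hxB]
          constructor <;> nlinarith
        · simp only [Set.indicator_of_notMem hxA, Set.indicator_of_notMem hxA1,
            Set.indicator_of_notMem hxB]
          norm_num
    have iA : Integrable (A.indicator fun _ => (1:ℝ)) (volume.restrict D) :=
      (integrable_const 1).indicator hAm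
    have iA1 : Integrable (A₁.indicator fun _ => (1:ℝ)) (volume.restrict D) :=
      (integrable_const 1).indicator hA₁m
    have iB1 : Integrable (B₁.indicator fun _ => (1:ℝ)) (volume.restrict D) :=
      (integrable_const 1).indicator hB₁m
    have j2 : Integrable (fun x => (-α) * A₁.indicator (fun _ => (1:ℝ)) x) (volume.restrict D) :=
      iA1.const_mul _
    have j3 : Integrable (fun x => β * B₁.indicator (fun _ => (1:ℝ)) x) (volume.restrict D) :=
      iB1.const_mul _
    have j12 : Integrable (fun x => A.indicator (fun _ => (1:ℝ)) x
        + (-α) * A₁.indicator (fun _ => (1:ℝ)) x) (volume.restrict D) := iA.add j2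
    have hToReal : ((volume.restrict D) A).toReal = c := by
      rw [hμA, ENNReal.toReal_ofReal hc0.le]
    have hint : ∫ x, h x ∂(volume.restrict D) = c := by
      rw [integral_congr_ae hcoe, integral_add j12 j3, integral_add iA j2,
        integral_const_mul, integral_const_mul, integral_indicator_const (1:ℝ) hAm,
        integral_indicator_const (1:ℝ) hA₁m, integral_indicator_const (1:ℝ) hB₁m]
      simp only [smul_eq_mul, mul_one, Measure.real]
      rw [hToReal, ← hadef, ← hbdef]
      nlinarith [hαa, hβb]
    have hhS : h ∈ S := by rw [hS]; exact ⟨hbdd, hint⟩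
    have hle := hmin h hhS
    have k2 : Integrable (fun x => (-α) * A₁.indicator (fun y => v y) x) (volume.restrict D) :=
      (hvint.indicator hA₁m).const_mul _
    have k3 : Integrable (fun x => β * B₁.indicator (fun y => v y) x) (volume.restrict D) :=
      (hvint.indicator hB₁m).const_mul _
    have k12 : Integrable (fun x => A.indicator (fun y => v y) x
        + (-α) * A₁.indicator (fun y => v y) x) (volume.restrict D) :=
      (hvint.indicator hAm).add k2
    have hmul : ∫ x, h x * v x ∂(volume.restrict D)
        = (∫ x in A, v x ∂(volume.restrict D))
          + (-α) * (∫ x in A₁, v x ∂(volume.restrict D))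
          + β * (∫ x in B₁, v x ∂(volume.restrict D)) := by
      have hcoe2 : (fun x => h x * v x) =ᵐ[volume.restrict D] fun x =>
          A.indicator (fun y => v y) x + (-α) * A₁.indicator (fun y => v y) x
            + β * B₁.indicator (fun y => v y) x := by
        filter_upwards [hcoe] with x hx
        rw [hx]
        simp only [Set.indicator]
        split_ifs <;> ring
      rw [integral_congr_ae hcoe2, integral_add k12 k3, integral_add (hvint.indicator hAm) k2,
        integral_const_mul, integral_const_mul,
        integral_indicator hAm, integral_indicator hA₁m, integral_indicator hB₁m]
    rw [hmul] at hle
    have hbound1 : t * a ≤ ∫ x in A₁, v x ∂(volume.restrict D) := by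
      have hmono := setIntegral_mono_on (s := A₁) (f := fun _ => t) (g := fun x => v x)
        (integrableOn_const (measure_lt_top (volume.restrict D) A₁).ne)
        hvint.integrableOn hA₁m (fun x hx => le_of_lt hx.2)
      rw [setIntegral_const] at hmono
      calc t * a = ((volume.restrict D) A₁).toReal • t := by rw [smul_eq_mul]; ring
        _ ≤ _ := hmono
    have hbound2 : (∫ x in B₁, v x ∂(volume.restrict D)) ≤ s * b := by
      have hmono := setIntegral_mono_on (s := B₁) (f := fun x => v x) (g := fun _ => s)
        hvint.integrableOn
        (integrableOn_const (measure_lt_top (volume.restrict D) B₁).ne)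
        hB₁m (fun x hx => le_of_lt hx.2)
      rw [setIntegral_const] at hmono
      calc (∫ x in B₁, v x ∂(volume.restrict D)) ≤ ((volume.restrict D) B₁).toReal • s := hmono
        _ = s * b := by rw [smul_eq_mul]; ring
    have hI3 : α * (∫ x in A₁, v x ∂(volume.restrict D))
        ≤ β * (∫ x in B₁, v x ∂(volume.restrict D)) := by linarith
    have htm : t * m ≤ s * m := by
      have e1 : α * (t * a) = t * m := by rw [← hαa]; ring
      have e2 : β * (s * b) = s * m := by rw [← hβb]; ring
      nlinarith [mul_le_mul_of_nonneg_left hbound1 hα0.le,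
        mul_le_mul_of_nonneg_left hbound2 hβ0.le]
    nlinarith [mul_pos (sub_pos.mpr hst) hm]
  -- Now the essSup/essInf conclusion
  set ν₁ := (volume.restrict D).restrict A with hν₁def
  set ν₂ := (volume.restrict D).restrict (D \ A) with hν₂def
  have hν₁0 : ν₁ ≠ 0 := by
    intro hh
    have huniv : ν₁ Set.univ = ENNReal.ofReal c := by
      rw [hν₁def, Measure.restrict_apply_univ, hμA]
    rw [hh] at huniv
    simp only [Measure.coe_zero, Pi.zero_apply] at huniv
    exact absurd huniv.symm (ENNReal.ofReal_pos.mpr hc0).ne'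
  have hν₂0 : ν₂ ≠ 0 := by
    intro hh
    have hz : volume (D \ A) = 0 := by
      have huniv : ν₂ Set.univ = volume (D \ A) := by
        rw [hν₂def, Measure.restrict_apply_univ,
          Measure.restrict_apply (hDo.measurableSet.diff hAm),
          Set.inter_eq_left.mpr Set.diff_subset]
      rw [hh] at huniv
      simpa using huniv.symm
    have hle2 : volume D ≤ volume A + volume (D \ A) := by
      calc volume D ≤ volume (A ∪ (D \ A)) := measure_mono (fun x hx => by
            by_cases hxa : x ∈ A
            · exact Or.inl hxa
            · exact Or.inr ⟨hx, hxa⟩)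
        _ ≤ volume A + volume (D \ A) := measure_union_le _ _
    rw [hz, add_zero, hAc] at hle2
    exact absurd hle2 (not_le.mpr hc1)
  haveI hNB1 : (ae ν₁).NeBot := ae_neBot.mpr hν₁0
  haveI hNB2 : (ae ν₂).NeBot := ae_neBot.mpr hν₂0
  have hfreq1 : ∃ n : ℕ, ∃ᵐ x ∂ν₁, -(n:ℝ) ≤ v x := by
    by_contra hcon
    push_neg at hcon
    simp only [frequently_ae_iff, ne_eq, not_not, ae_iff, not_lt] at hcon
    have huniv : (⋃ n : ℕ, {x | -(n:ℝ) ≤ (v : _ → ℝ) x}) = Set.univ := by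
      ext x
      simp only [Set.mem_iUnion, Set.mem_setOf_eq, Set.mem_univ, iff_true]
      obtain ⟨n, hn⟩ := exists_nat_ge (-(v x))
      exact ⟨n, by linarith⟩
    have hz := measure_iUnion_null (μ := ν₁) hcon
    rw [huniv] at hz
    exact hν₁0 (Measure.measure_univ_eq_zero.mp hz)
  have hfreq2 : ∃ n : ℕ, ∃ᵐ x ∂ν₂, (v : _ → ℝ) x ≤ (n:ℝ) := by
    by_contra hcon
    push_neg at hcon
    simp only [frequently_ae_iff, ne_eq, not_not, ae_iff, not_lt] at hcon
    have huniv : (⋃ n : ℕ, {x | (v : _ → ℝ) x ≤ (n:ℝ)}) = Set.univ := by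
      ext x
      simp only [Set.mem_iUnion, Set.mem_setOf_eq, Set.mem_univ, iff_true]
      exact exists_nat_ge (v x)
    have hz := measure_iUnion_null (μ := ν₂) hcon
    rw [huniv] at hz
    exact hν₂0 (Measure.measure_univ_eq_zero.mp hz)
  by_contra hcon
  push_neg at hcon
  obtain ⟨s, hs1, hs2⟩ := exists_between hcon
  obtain ⟨t, ht1, ht2⟩ := exists_between hs2
  rcases key s t ht1 with h1 | h2
  · have hms : MeasurableSet {x | ¬ (v : _ → ℝ) x ≤ t} := by
      simpa [not_le] using (measurableSet_lt measurable_const hvm)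
    have hae : ∀ᵐ x ∂ν₁, v x ≤ t := by
      rw [ae_iff, hν₁def, Measure.restrict_apply hms]
      have hset : {x | ¬ (v : _ → ℝ) x ≤ t} ∩ A = A ∩ {x | t < v x} := by
        ext x; simp [not_le, and_comm]
      rw [hset]; exact h1
    obtain ⟨n, hfr⟩ := hfreq1
    have hup : essSup (fun x => v x) ν₁ ≤ t :=
      Filter.limsup_le_of_le (Filter.IsCoboundedUnder.of_frequently_ge hfr) hae
    exact absurd hup (not_le.mpr ht2)
  · have hms : MeasurableSet {x | ¬ s ≤ (v : _ → ℝ) x} := by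
      simpa [not_le] using (measurableSet_lt hvm measurable_const)
    have hae : ∀ᵐ x ∂ν₂, s ≤ v x := by
      rw [ae_iff, hν₂def, Measure.restrict_apply hms]
      have hset : {x | ¬ s ≤ (v : _ → ℝ) x} ∩ (D \ A) = (D \ A) ∩ {x | v x < s} := by
        ext x; simp [not_le, and_comm]
      rw [hset]; exact h2
    obtain ⟨n, hfr⟩ := hfreq2
    have hlow : s ≤ essInf (fun x => v x) ν₂ :=
      Filter.le_liminf_of_le (Filter.IsCoboundedUnder.of_frequently_le hfr) hae
    exact absurd hs1 (not_lt.mpr hlow)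
end

section
/- Let D ⊆ ℝ^d be a bounded open set with Lebesgue measure λ, let v ∈ L²(D,λ), and let 0 < c < λ(D). Suppose f̂ ∈ S(c) = {h ∈ L²(D,λ) : 0 ≤ h ≤ 1 λ-a.e. and ∫_D h dλ = c} satisfies ∫_D f̂ v dλ ≤ ∫_D h v dλ for every h ∈ S(c). Then there exists α ∈ ℝ such that f̂ = 1 λ-a.e. on the set {x ∈ D : v(x) < α} and f̂ = 0 λ-a.e. on the set {x ∈ D : v(x) > α}. -/
open MeasureTheory

lemma bathtub_exchange {α : Type*} [MeasurableSpace α] (μ : Measure α) [IsFiniteMeasure μ]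
    (v fhat : Lp ℝ 2 μ)
    (hf01 : ∀ᵐ x ∂μ, 0 ≤ fhat x ∧ fhat x ≤ 1)
    (hmin : ∀ h : Lp ℝ 2 μ, (∀ᵐ x ∂μ, 0 ≤ h x ∧ h x ≤ 1) →
      (∫ x, h x ∂μ = ∫ x, fhat x ∂μ) →
      ∫ x, fhat x * v x ∂μ ≤ ∫ x, h x * v x ∂μ)
    (a b : ℝ) (hab : a < b) :
    μ {x | v x < a ∧ fhat x < 1} = 0 ∨ μ {x | b < v x ∧ 0 < fhat x} = 0 := by
  by_contra hcon
  push_neg at hcon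
  obtain ⟨hA0, hB0⟩ := hcon
  have hVm : Measurable (⇑v) := (Lp.stronglyMeasurable v).measurable
  have hFm : Measurable (⇑fhat) := (Lp.stronglyMeasurable fhat).measurable
  -- find ε
  have hAsub : {x | v x < a ∧ fhat x < 1} ⊆
      ⋃ n : ℕ, {x | v x < a ∧ fhat x ≤ 1 - 1 / (n + 1)} := by
    intro x ⟨hx1, hx2⟩
    obtain ⟨n, hn⟩ := exists_nat_one_div_lt (sub_pos.2 hx2)
    exact Set.mem_iUnion.2 ⟨n, hx1, by push_cast at hn ⊢; linarith⟩
  have hBsub : {x | b < v x ∧ 0 < fhat x} ⊆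
      ⋃ n : ℕ, {x | b < v x ∧ 1 / (n + 1) ≤ fhat x} := by
    intro x ⟨hx1, hx2⟩
    obtain ⟨n, hn⟩ := exists_nat_one_div_lt hx2
    exact Set.mem_iUnion.2 ⟨n, hx1, by push_cast at hn ⊢; linarith⟩
  have hAex : ∃ n : ℕ, μ {x | v x < a ∧ fhat x ≤ 1 - 1 / (n + 1)} ≠ 0 := by
    by_contra hc; push_neg at hc
    exact hA0 (measure_mono_null hAsub (measure_iUnion_null hc))
  have hBex : ∃ n : ℕ, μ {x | b < v x ∧ 1 / (n + 1) ≤ fhat x} ≠ 0 := by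
    by_contra hc; push_neg at hc
    exact hB0 (measure_mono_null hBsub (measure_iUnion_null hc))
  obtain ⟨n, hn⟩ := hAex
  obtain ⟨m, hm⟩ := hBex
  set ε : ℝ := min (1 / (n + 1)) (1 / (m + 1)) with hε
  have hε0 : 0 < ε := lt_min (by positivity) (by positivity)
  set A : Set α := {x | v x < a ∧ fhat x ≤ 1 - ε} with hAdef
  set B : Set α := {x | b < v x ∧ ε ≤ fhat x} with hBdef
  have hAm : MeasurableSet A :=
    (measurableSet_lt hVm measurable_const).inter (measurableSet_le hFm measurable_const)
  have hBm : MeasurableSet B :=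
    (measurableSet_lt measurable_const hVm).inter (measurableSet_le measurable_const hFm)
  have hA : μ A ≠ 0 := by
    refine fun h => hn (measure_mono_null (fun x hx => ?_) h)
    refine ⟨hx.1, le_trans hx.2 ?_⟩
    have : ε ≤ 1 / (n + 1) := min_le_left _ _
    linarith
  have hB : μ B ≠ 0 := by
    refine fun h => hm (measure_mono_null (fun x hx => ?_) h)
    refine ⟨hx.1, le_trans ?_ hx.2⟩
    exact min_le_right _ _
  have hAB : ∀ x, x ∈ A → x ∉ B := fun x hxA hxB => absurd (hxB.1.trans hxA.1) (by linarith)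
  set pA : ℝ := (μ A).toReal with hpA
  set pB : ℝ := (μ B).toReal with hpB
  have hpA0 : 0 < pA := ENNReal.toReal_pos hA (measure_ne_top μ A)
  have hpB0 : 0 < pB := ENNReal.toReal_pos hB (measure_ne_top μ B)
  set δ : ℝ := ε * min pA pB with hδ
  have hδ0 : 0 < δ := mul_pos hε0 (lt_min hpA0 hpB0)
  set cA : ℝ := δ / pA with hcA
  set cB : ℝ := δ / pB with hcB
  have hcA0 : 0 < cA := div_pos hδ0 hpA0
  have hcB0 : 0 < cB := div_pos hδ0 hpB0
  have hcAε : cA ≤ ε := by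
    rw [hcA, div_le_iff₀ hpA0, hδ]
    have := min_le_left pA pB
    nlinarith
  have hcBε : cB ≤ ε := by
    rw [hcB, div_le_iff₀ hpB0, hδ]
    have := min_le_right pA pB
    nlinarith
  set h : Lp ℝ 2 μ := fhat + indicatorConstLp 2 hAm (measure_ne_top μ A) cA
      - indicatorConstLp 2 hBm (measure_ne_top μ B) cB with hhdef
  have hcoe : ⇑h =ᵐ[μ] fun x =>
      fhat x + A.indicator (fun _ => cA) x - B.indicator (fun _ => cB) x := by
    filter_upwards [Lp.coeFn_sub (fhat + indicatorConstLp 2 hAm (measure_ne_top μ A) cA)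
        (indicatorConstLp 2 hBm (measure_ne_top μ B) cB),
      Lp.coeFn_add fhat (indicatorConstLp 2 hAm (measure_ne_top μ A) cA),
      indicatorConstLp_coeFn (p := 2) (hs := hAm) (hμs := measure_ne_top μ A) (c := cA),
      indicatorConstLp_coeFn (p := 2) (hs := hBm) (hμs := measure_ne_top μ B) (c := cB)]
      with x h1 h2 h3 h4
    rw [hhdef]
    simp only [h1, Pi.sub_apply, h2, Pi.add_apply, h3, h4]
  have hh01 : ∀ᵐ x ∂μ, 0 ≤ h x ∧ h x ≤ 1 := by
    filter_upwards [hcoe, hf01] with x hx hf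
    rw [hx]
    by_cases hxA : x ∈ A
    · have hxB : x ∉ B := hAB x hxA
      rw [Set.indicator_of_mem hxA, Set.indicator_of_notMem hxB]
      have := hxA.2
      constructor <;> [linarith [hf.1]; linarith]
    · rw [Set.indicator_of_notMem hxA]
      by_cases hxB : x ∈ B
      · rw [Set.indicator_of_mem hxB]
        have := hxB.2
        constructor <;> [linarith; linarith [hf.2]]
      · rw [Set.indicator_of_notMem hxB]
        constructor <;> [linarith [hf.1]; linarith [hf.2]]
  have hfInt : Integrable (⇑fhat) μ := (Lp.memLp fhat).integrable (by norm_num)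
  have hvInt : Integrable (⇑v) μ := (Lp.memLp v).integrable (by norm_num)
  have hiAInt : Integrable (A.indicator fun _ => cA) μ := (integrable_const cA).indicator hAm
  have hiBInt : Integrable (B.indicator fun _ => cB) μ := (integrable_const cB).indicator hBm
  have hAval : cA * pA = δ := by rw [hcA, div_mul_cancel₀ _ hpA0.ne']
  have hBval : cB * pB = δ := by rw [hcB, div_mul_cancel₀ _ hpB0.ne']
  have hmean : ∫ x, h x ∂μ = ∫ x, fhat x ∂μ := by
    have hsum : Integrable (fun x => fhat x + A.indicator (fun _ => cA) x) μ := hfInt.add hiAInt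
    rw [integral_congr_ae hcoe, integral_sub hsum hiBInt,
      integral_add hfInt hiAInt, integral_indicator_const _ hAm, integral_indicator_const _ hBm]
    simp only [smul_eq_mul, measureReal_def, ← hpA, ← hpB]
    rw [mul_comm pA cA, mul_comm pB cB] at *
    linarith [hAval, hBval]
  have hfvInt : Integrable (fun x => fhat x * v x) μ := by
    have := L2.integrable_inner (𝕜 := ℝ) fhat v
    simpa [RCLike.inner_apply, mul_comm] using this
  have heA : (fun x => A.indicator (fun _ => cA) x * v x) = A.indicator (fun y => cA * v y) := by
    funext x; by_cases hx : x ∈ A <;> simp [hx]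
  have heB : (fun x => B.indicator (fun _ => cB) x * v x) = B.indicator (fun y => cB * v y) := by
    funext x; by_cases hx : x ∈ B <;> simp [hx]
  have hiAv : Integrable (fun x => A.indicator (fun _ => cA) x * v x) μ := by
    rw [heA]; exact (hvInt.const_mul cA).indicator hAm
  have hiBv : Integrable (fun x => B.indicator (fun _ => cB) x * v x) μ := by
    rw [heB]; exact (hvInt.const_mul cB).indicator hBm
  have hobj : ∫ x, h x * v x ∂μ = ∫ x, fhat x * v x ∂μ
      + cA * ∫ x in A, v x ∂μ - cB * ∫ x in B, v x ∂μ := by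
    have hcongr : (fun x => h x * v x) =ᵐ[μ] fun x => fhat x * v x
        + A.indicator (fun _ => cA) x * v x - B.indicator (fun _ => cB) x * v x := by
      filter_upwards [hcoe] with x hx
      rw [hx]; ring
    have hsum2 : Integrable (fun x => fhat x * v x + A.indicator (fun _ => cA) x * v x) μ :=
      hfvInt.add hiAv
    rw [integral_congr_ae hcongr, integral_sub hsum2 hiBv, integral_add hfvInt hiAv]
    congr 1
    · congr 1
      rw [heA, integral_indicator hAm, integral_const_mul]
    · rw [heB, integral_indicator hBm, integral_const_mul]
  have hIA : ∫ x in A, v x ∂μ ≤ a * pA := by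
    have h1 : ∫ x in A, v x ∂μ ≤ ∫ _x in A, a ∂μ :=
      setIntegral_mono_on hvInt.integrableOn
        (integrableOn_const (measure_ne_top μ A)) hAm (fun x hx => hx.1.le)
    rw [setIntegral_const, smul_eq_mul, mul_comm] at h1
    exact h1
  have hIB : b * pB ≤ ∫ x in B, v x ∂μ := by
    have h1 : ∫ _x in B, b ∂μ ≤ ∫ x in B, v x ∂μ :=
      setIntegral_mono_on (integrableOn_const (measure_ne_top μ B))
        hvInt.integrableOn hBm (fun x hx => hx.1.le)
    rw [setIntegral_const, smul_eq_mul, mul_comm] at h1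
    exact h1
  have hlt : ∫ x, h x * v x ∂μ < ∫ x, fhat x * v x ∂μ := by
    rw [hobj]
    have h1 : cA * ∫ x in A, v x ∂μ ≤ δ * a :=
      calc cA * ∫ x in A, v x ∂μ ≤ cA * (a * pA) := mul_le_mul_of_nonneg_left hIA hcA0.le
        _ = cA * pA * a := by ring
        _ = δ * a := by rw [hAval]
    have h2 : δ * b ≤ cB * ∫ x in B, v x ∂μ :=
      calc δ * b = cB * pB * b := by rw [hBval]
        _ = cB * (b * pB) := by ring
        _ ≤ cB * ∫ x in B, v x ∂μ := mul_le_mul_of_nonneg_left hIB hcB0.le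
    have h3 : δ * a < δ * b := by nlinarith
    linarith
  exact absurd (hmin h hh01 hmean) (not_le.2 hlt)

theorem stmt_6 (d : ℕ) (D : Set (EuclideanSpace ℝ (Fin d)))
    (hDo : IsOpen D) (hDb : Bornology.IsBounded D)
    (v : Lp ℝ 2 (volume.restrict D))
    (c : ℝ) (hc0 : 0 < c) (hc1 : ENNReal.ofReal c < volume D)
    (S : Set (Lp ℝ 2 (volume.restrict D)))
    (hS : S = {h | (∀ᵐ x ∂(volume.restrict D), 0 ≤ h x ∧ h x ≤ 1) ∧
      ∫ x, h x ∂(volume.restrict D) = c})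
    (fhat : Lp ℝ 2 (volume.restrict D)) (hfS : fhat ∈ S)
    (hmin : ∀ h ∈ S, ∫ x, fhat x * v x ∂(volume.restrict D) ≤
      ∫ x, h x * v x ∂(volume.restrict D)) :
    ∃ α : ℝ, ∀ᵐ x ∂(volume.restrict D),
      (v x < α → fhat x = 1) ∧ (α < v x → fhat x = 0) := by
  haveI : IsFiniteMeasure (volume.restrict D) := by
    constructor
    rw [Measure.restrict_apply_univ]
    exact hDb.measure_lt_top
  rw [hS] at hfS
  obtain ⟨hf01, hfc⟩ := hfS
  have hmin' : ∀ h : Lp ℝ 2 (volume.restrict D), (∀ᵐ x ∂(volume.restrict D), 0 ≤ h x ∧ h x ≤ 1) →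
      (∫ x, h x ∂(volume.restrict D) = ∫ x, fhat x ∂(volume.restrict D)) →
      ∫ x, fhat x * v x ∂(volume.restrict D) ≤ ∫ x, h x * v x ∂(volume.restrict D) := by
    intro h h1 h2
    exact hmin h (by rw [hS]; exact ⟨h1, by rw [h2, hfc]⟩)
  have exch := bathtub_exchange (volume.restrict D) v fhat hf01 hmin'
  set A : ℝ → Set (EuclideanSpace ℝ (Fin d)) := fun t => {x | v x < t ∧ fhat x < 1} with hA
  set B : ℝ → Set (EuclideanSpace ℝ (Fin d)) := fun t => {x | t < v x ∧ 0 < fhat x} with hB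
  have hAmono : ∀ {s t : ℝ}, s ≤ t → A s ⊆ A t :=
    fun hst x hx => ⟨lt_of_lt_of_le hx.1 hst, hx.2⟩
  set T : Set ℝ := {t | (volume.restrict D) (A t) = 0} with hT
  -- T nonempty
  have hTne : T.Nonempty := by
    by_contra hc
    rw [Set.not_nonempty_iff_eq_empty] at hc
    have hall : ∀ t : ℝ, (volume.restrict D) (A t) ≠ 0 := by
      intro t ht
      exact absurd (hc ▸ ht : t ∈ (∅ : Set ℝ)) (Set.notMem_empty t)
    have hBnull : ∀ b : ℝ, (volume.restrict D) (B b) = 0 := fun b =>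
      (exch (b - 1) b (by linarith)).resolve_left (hall (b - 1))
    have hcov : {x | 0 < fhat x} ⊆ ⋃ n : ℕ, B (-(n : ℝ)) := by
      intro x hx
      obtain ⟨n, hn⟩ := exists_nat_gt (-(v x))
      exact Set.mem_iUnion.2 ⟨n, by simpa using neg_lt.2 hn, hx⟩
    have h0 : (volume.restrict D) {x | 0 < fhat x} = 0 :=
      measure_mono_null hcov (measure_iUnion_null fun n => hBnull _)
    have hf0 : ∀ᵐ x ∂(volume.restrict D), fhat x = 0 := by
      have hle : ∀ᵐ x ∂(volume.restrict D), ¬ (0 < fhat x) := by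
        rw [ae_iff]; simpa using h0
      filter_upwards [hle, hf01] with x h1 h2
      exact le_antisymm (not_lt.1 h1) h2.1
    have : ∫ x, fhat x ∂(volume.restrict D) = 0 := by
      rw [integral_congr_ae hf0, integral_zero]
    rw [hfc] at this
    linarith
  -- T bounded above
  have hvolD : (volume.restrict D) Set.univ = volume D := Measure.restrict_apply_univ D
  have hTbdd : BddAbove T := by
    by_contra hc
    rw [not_bddAbove_iff] at hc
    have hall : ∀ t : ℝ, (volume.restrict D) (A t) = 0 := by
      intro t
      obtain ⟨t', ht'T, htt'⟩ := hc t
      exact measure_mono_null (hAmono htt'.le) ht'T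
    have hcov : {x | fhat x < 1} ⊆ ⋃ n : ℕ, A n := by
      intro x hx
      obtain ⟨n, hn⟩ := exists_nat_gt (v x)
      exact Set.mem_iUnion.2 ⟨n, hn, hx⟩
    have h0 : (volume.restrict D) {x | fhat x < 1} = 0 :=
      measure_mono_null hcov (measure_iUnion_null fun n => hall _)
    have hf1 : ∀ᵐ x ∂(volume.restrict D), fhat x = 1 := by
      have hle : ∀ᵐ x ∂(volume.restrict D), ¬ (fhat x < 1) := by
        rw [ae_iff]; simpa using h0
      filter_upwards [hle, hf01] with x h1 h2
      exact le_antisymm h2.2 (not_lt.1 h1)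
    have hint : ∫ x, fhat x ∂(volume.restrict D) = (volume D).toReal := by
      rw [integral_congr_ae hf1, integral_const, smul_eq_mul, mul_one, measureReal_def, hvolD]
    have hlt : c < (volume D).toReal := by
      have := (ENNReal.toReal_lt_toReal ENNReal.ofReal_ne_top hDb.measure_lt_top.ne).mpr hc1
      rwa [ENNReal.toReal_ofReal hc0.le] at this
    rw [hfc] at hint
    linarith
  set α := sSup T with hα
  refine ⟨α, ?_⟩
  -- null sets
  have null1 : (volume.restrict D) (A α) = 0 := by
    have hcov : A α ⊆ ⋃ n : ℕ, A (α - 1 / (n + 1)) := by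
      intro x hx
      obtain ⟨n, hn⟩ := exists_nat_one_div_lt (sub_pos.2 hx.1)
      exact Set.mem_iUnion.2 ⟨n, by constructor <;> [linarith [hx.1]; exact hx.2]⟩
    refine measure_mono_null hcov (measure_iUnion_null fun n => ?_)
    have h1 : α - 1 / (n + 1) < α := by
      have : (0:ℝ) < 1 / (n + 1) := by positivity
      linarith
    obtain ⟨t', ht'T, htt'⟩ := exists_lt_of_lt_csSup hTne h1
    exact measure_mono_null (hAmono htt'.le) ht'T
  have null2 : (volume.restrict D) {x | α < v x ∧ 0 < fhat x} = 0 := by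
    have hcov : {x | α < v x ∧ 0 < fhat x} ⊆ ⋃ n : ℕ, B (α + 1 / (n + 1)) := by
      intro x hx
      obtain ⟨n, hn⟩ := exists_nat_one_div_lt (sub_pos.2 hx.1)
      exact Set.mem_iUnion.2 ⟨n, by constructor <;> [linarith [hx.1]; exact hx.2]⟩
    refine measure_mono_null hcov (measure_iUnion_null fun n => ?_)
    obtain ⟨s, hs⟩ : ∃ s : ℝ, s = α + 1 / (↑n + 2) := ⟨_, rfl⟩
    have hs1 : α < s := by
      have : (0:ℝ) < 1 / (↑n + 2) := by positivity
      linarith [hs]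
    have hs2 : s < α + 1 / (↑n + 1) := by
      have : (1:ℝ) / (↑n + 2) < 1 / (↑n + 1) := by
        apply one_div_lt_one_div_of_lt <;> [positivity; linarith]
      linarith [hs]
    have hsnT : (volume.restrict D) (A s) ≠ 0 := by
      intro h0
      have : s ∈ T := h0
      have := le_csSup hTbdd this
      rw [← hα] at this
      linarith
    exact (exch s _ hs2).resolve_left hsnT
  have e1 : ∀ᵐ x ∂(volume.restrict D), ¬ (v x < α ∧ fhat x < 1) := by
    rw [ae_iff]; simpa using null1
  have e2 : ∀ᵐ x ∂(volume.restrict D), ¬ (α < v x ∧ 0 < fhat x) := by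
    rw [ae_iff]; simpa using null2
  filter_upwards [hf01, e1, e2] with x hx h1 h2
  constructor
  · intro hv
    by_contra hne
    exact h1 ⟨hv, lt_of_le_of_ne hx.2 hne⟩
  · intro hv
    by_contra hne
    exact h2 ⟨hv, lt_of_le_of_ne hx.1 (Ne.symm hne)⟩
end

section
/- Let D ⊆ ℝ^d be a bounded open set, let Ω = D × (0,1) ⊆ ℝ^d × ℝ, and let u be continuous on the closure of Ω, twice continuously differentiable on Ω, with Δu(x',t) = −f(x') for all (x',t) ∈ Ω for some function f : D → ℝ, and u = 0 on the topological boundary ∂Ω. Then u(x',t) = u(x',1−t) for every (x',t) in the closure of Ω. Consequently, if in addition u is continuously differentiable up to D × {0} and D × {1}, then ∂_t u(x',0) = −∂_t u(x',1) for every x' ∈ D. -/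
open MeasureTheory Filter Set Topology

/-- Second directional derivative of `f` at `x` in the direction `w` (twice). -/
noncomputable def pderiv2 {E : Type*} [NormedAddCommGroup E] [NormedSpace ℝ E]
    (f : E → ℝ) (x w : E) : ℝ :=
  fderiv ℝ (fun y => fderiv ℝ f y w) x w

/-- The `i`-th horizontal unit vector of `ℝ^d × ℝ`. -/
noncomputable def eI (d : ℕ) (i : Fin d) : (Fin d → ℝ) × ℝ := (Pi.single i 1, 0)

/-- The vertical unit vector of `ℝ^d × ℝ`. -/
noncomputable def eT (d : ℕ) : (Fin d → ℝ) × ℝ := (0, 1)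

/-- 1-d second derivative test at a local max. -/
lemma secondDeriv_nonpos_of_isLocalMax {ψ : ℝ → ℝ} {c : ℝ}
    (hd : ∀ᶠ t in 𝓝 (0:ℝ), DifferentiableAt ℝ ψ t)
    (hmax : IsLocalMax ψ 0)
    (h2 : HasDerivAt (deriv ψ) c 0) : c ≤ 0 := by
  by_contra hc
  push_neg at hc
  have h0 : deriv ψ 0 = 0 := hmax.deriv_eq_zero
  have hslope : Tendsto (slope (deriv ψ) 0) (𝓝[≠] 0) (𝓝 c) :=
    hasDerivAt_iff_tendsto_slope.1 h2
  have hpos : ∀ᶠ t in 𝓝 (0:ℝ), t ≠ 0 → 0 < slope (deriv ψ) 0 t :=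
    eventually_nhdsWithin_iff.1 (hslope.eventually (eventually_gt_nhds hc))
  have hall : ∀ᶠ t in 𝓝 (0:ℝ),
      DifferentiableAt ℝ ψ t ∧ ψ t ≤ ψ 0 ∧ (t ≠ 0 → 0 < slope (deriv ψ) 0 t) :=
    hd.and (hmax.and hpos)
  obtain ⟨δ, hδ, hδall⟩ := Metric.eventually_nhds_iff.1 hall
  have hmem : ∀ t ∈ Icc (0:ℝ) (δ/2), dist t 0 < δ := by
    intro t ht
    rw [Real.dist_eq, sub_zero, abs_of_nonneg ht.1]
    linarith [ht.2]
  have hcont : ContinuousOn ψ (Icc 0 (δ/2)) := fun t ht =>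
    ((hδall (hmem t ht)).1.continuousAt).continuousWithinAt
  have hderivpos : ∀ t ∈ interior (Icc (0:ℝ) (δ/2)), 0 < deriv ψ t := by
    intro t ht
    rw [interior_Icc] at ht
    have h1 := (hδall (hmem t ⟨le_of_lt ht.1, le_of_lt ht.2⟩)).2.2 (ne_of_gt ht.1)
    rw [slope_def_field, h0, sub_zero, sub_zero, div_pos_iff] at h1
    rcases h1 with h1 | h1
    · exact h1.1
    · linarith [h1.2, ht.1]
  have hmono := strictMonoOn_of_deriv_pos (convex_Icc 0 (δ/2)) hcont hderivpos
  have h5 : ψ 0 < ψ (δ/2) := by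
    refine hmono ⟨le_refl 0, by linarith⟩ ⟨by linarith, le_refl _⟩ (by linarith)
  have h6 := (hδall (hmem (δ/2) ⟨by linarith, le_refl _⟩)).2.1
  linarith

variable {E : Type*} [NormedAddCommGroup E] [NormedSpace ℝ E]

lemma line_hasDerivAt {g : E → ℝ} {x dir : E} {t : ℝ} (h : DifferentiableAt ℝ g (x + t • dir)) :
    HasDerivAt (fun s : ℝ => g (x + s • dir)) (fderiv ℝ g (x + t • dir) dir) t := by
  have hL : HasDerivAt (fun s : ℝ => x + s • dir) dir t := by
    simpa using ((hasDerivAt_id t).smul_const dir).const_add x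
  exact h.hasFDerivAt.comp_hasDerivAt t hL

lemma pderiv2_line {g : E → ℝ} {x dir : E}
    (hd : ∀ᶠ y in 𝓝 x, DifferentiableAt ℝ g y)
    (hd2 : DifferentiableAt ℝ (fun y => fderiv ℝ g y dir) x) :
    HasDerivAt (deriv (fun t : ℝ => g (x + t • dir))) (pderiv2 g x dir) 0 := by
  have hLc : Continuous (fun t : ℝ => x + t • dir) := by continuity
  have hL0 : (fun t : ℝ => x + t • dir) 0 = x := by simp
  have hdt : ∀ᶠ t in 𝓝 (0:ℝ), DifferentiableAt ℝ g (x + t • dir) := by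
    have := hLc.continuousAt (x := (0:ℝ))
    rw [ContinuousAt] at this
    simp only [zero_smul, add_zero] at this
    exact this.eventually hd
  have hderiv : deriv (fun t : ℝ => g (x + t • dir)) =ᶠ[𝓝 (0:ℝ)]
      fun t => fderiv ℝ g (x + t • dir) dir :=
    hdt.mono fun t ht => (line_hasDerivAt ht).deriv
  have hG : HasDerivAt (fun t : ℝ => fderiv ℝ g (x + t • dir) dir)
      (fderiv ℝ (fun y => fderiv ℝ g y dir) x dir) 0 := by
    have hL : HasDerivAt (fun s : ℝ => x + s • dir) dir 0 := by
      simpa using ((hasDerivAt_id (0:ℝ)).smul_const dir).const_add x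
    have h' : HasFDerivAt (fun y => fderiv ℝ g y dir)
        (fderiv ℝ (fun y => fderiv ℝ g y dir) x) (x + (0:ℝ) • dir) := by
      simpa using hd2.hasFDerivAt
    simpa [Function.comp_def] using h'.comp_hasDerivAt 0 hL
  exact hG.congr_of_eventuallyEq hderiv

lemma pderiv2_nonpos_of_max {Ω : Set E} (hΩo : IsOpen Ω) {g : E → ℝ}
    (hg : ContDiffOn ℝ 2 g Ω) {x : E} (hx : x ∈ Ω)
    (hmax : IsMaxOn g (closure Ω) x) (dir : E) : pderiv2 g x dir ≤ 0 := by
  have hgx : ContDiffAt ℝ 2 g x := hg.contDiffAt (hΩo.mem_nhds hx)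
  have hd : ∀ᶠ y in 𝓝 x, DifferentiableAt ℝ g y :=
    (hgx.eventually (by norm_num)).mono fun y hy => hy.differentiableAt (by norm_num)
  have hd2 : DifferentiableAt ℝ (fun y => fderiv ℝ g y dir) x := by
    have hfd : ContDiffAt ℝ 1 (fderiv ℝ g) x := hgx.fderiv_right (le_refl _)
    exact (hfd.clm_apply contDiffAt_const).differentiableAt one_ne_zero
  have hLc : Continuous (fun t : ℝ => x + t • dir) := by continuity
  have hL0 : (fun t : ℝ => x + t • dir) 0 = x := by simp
  have hnhds : ∀ᶠ t in 𝓝 (0:ℝ), x + t • dir ∈ Ω := by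
    have := hLc.continuousAt (x := (0:ℝ))
    rw [ContinuousAt] at this
    simp only [zero_smul, add_zero] at this
    exact this.eventually (hΩo.eventually_mem hx)
  have hψd : ∀ᶠ t in 𝓝 (0:ℝ), DifferentiableAt ℝ (fun s : ℝ => g (x + s • dir)) t := by
    refine hnhds.mono fun t ht => ?_
    exact (line_hasDerivAt ((hg.contDiffAt (hΩo.mem_nhds ht)).differentiableAt
      (by norm_num))).differentiableAt
  have hψmax : IsLocalMax (fun t : ℝ => g (x + t • dir)) 0 := by
    refine hnhds.mono fun t ht => ?_
    simpa using hmax (subset_closure ht)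
  exact secondDeriv_nonpos_of_isLocalMax hψd hψmax (pderiv2_line hd hd2)
variable {d : ℕ}

lemma sq_hasFDerivAt {ε : ℝ} (y : (Fin d → ℝ) × ℝ) :
    HasFDerivAt (fun z : (Fin d → ℝ) × ℝ => ε * z.2^2)
      ((ε * (2 * y.2)) • (ContinuousLinearMap.snd ℝ (Fin d → ℝ) ℝ)) y := by
  have h1 : HasFDerivAt (fun z : (Fin d → ℝ) × ℝ => z.2)
      (ContinuousLinearMap.snd ℝ (Fin d → ℝ) ℝ) y := hasFDerivAt_snd
  have h3 := (h1.mul h1).const_mul ε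
  have heq : (ε • (y.2 • ContinuousLinearMap.snd ℝ (Fin d → ℝ) ℝ +
      y.2 • ContinuousLinearMap.snd ℝ (Fin d → ℝ) ℝ)) =
      ((ε * (2 * y.2)) • (ContinuousLinearMap.snd ℝ (Fin d → ℝ) ℝ)) := by
    rw [← two_smul ℝ, smul_smul, smul_smul, mul_assoc]
  rw [heq] at h3
  have hf : (fun z : (Fin d → ℝ) × ℝ => ε * z.2^2) =
      fun y => ε * ((fun z : (Fin d → ℝ) × ℝ => z.2) * fun z : (Fin d → ℝ) × ℝ => z.2) y := by
    funext z; simp only [Pi.mul_apply]; ring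
  rw [hf]; exact h3
lemma sq_fderiv_apply {ε : ℝ} (y v : (Fin d → ℝ) × ℝ) :
    fderiv ℝ (fun z : (Fin d → ℝ) × ℝ => ε * z.2^2) y v = ε * (2 * y.2) * v.2 := by
  rw [(sq_hasFDerivAt y).fderiv]; simp

lemma pderiv2_add_sq {g : (Fin d → ℝ) × ℝ → ℝ} {x v : (Fin d → ℝ) × ℝ} {ε : ℝ}
    (hd : ∀ᶠ y in 𝓝 x, DifferentiableAt ℝ g y)
    (hd2 : DifferentiableAt ℝ (fun y => fderiv ℝ g y v) x) :
    pderiv2 (fun y => g y + ε * y.2^2) x v = pderiv2 g x v + ε * 2 * v.2 * v.2 := by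
  have hlin : HasFDerivAt (fun y : (Fin d → ℝ) × ℝ => ε * 2 * v.2 * y.2)
      ((ε * 2 * v.2) • (ContinuousLinearMap.snd ℝ (Fin d → ℝ) ℝ)) x := by
    simpa using hasFDerivAt_snd.const_mul (ε * 2 * v.2)
  have step1 : (fun y => fderiv ℝ (fun z => g z + ε * z.2^2) y v) =ᶠ[𝓝 x]
      fun y => fderiv ℝ g y v + ε * 2 * v.2 * y.2 := by
    refine hd.mono fun y hy => ?_
    show (fderiv ℝ (fun z => g z + ε * z.2 ^ 2) y) v = (fderiv ℝ g y) v + ε * 2 * v.2 * y.2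
    rw [fderiv_fun_add hy (sq_hasFDerivAt y).differentiableAt]
    simp only [ContinuousLinearMap.add_apply]
    rw [sq_fderiv_apply]
    ring
  unfold pderiv2
  rw [step1.fderiv_eq, fderiv_fun_add hd2 hlin.differentiableAt]
  simp only [ContinuousLinearMap.add_apply]
  rw [hlin.fderiv]
  simp [mul_comm, mul_assoc]

lemma maxprin {d : ℕ} {Ω : Set ((Fin d → ℝ) × ℝ)} (hΩo : IsOpen Ω)
    (hcomp : IsCompact (closure Ω)) (hsl : ∀ x ∈ closure Ω, x.2^2 ≤ 1)
    {g : (Fin d → ℝ) × ℝ → ℝ} (hc : ContinuousOn g (closure Ω)) (hg : ContDiffOn ℝ 2 g Ω)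
    (heq : ∀ x ∈ Ω, (∑ i, pderiv2 g x (eI d i)) + pderiv2 g x (eT d) = 0)
    (hbd : ∀ x ∈ frontier Ω, g x = 0) :
    ∀ x ∈ closure Ω, g x ≤ 0 := by
  intro x hx
  refine le_of_forall_pos_le_add fun ε hε => ?_
  rw [zero_add]
  set h : (Fin d → ℝ) × ℝ → ℝ := fun y => g y + ε * y.2^2 with hh_def
  have hqc : Continuous (fun y : (Fin d → ℝ) × ℝ => ε * y.2^2) := by continuity
  have hhc : ContinuousOn h (closure Ω) := hc.add hqc.continuousOn
  obtain ⟨x0, hx0, hmax⟩ := hcomp.exists_isMaxOn ⟨x, hx⟩ hhc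
  have hqcd : ContDiff ℝ 2 (fun y : (Fin d → ℝ) × ℝ => ε * y.2^2) :=
    (contDiff_snd.pow 2).const_smul ε
  have hhsm : ContDiffOn ℝ 2 h Ω := hg.add hqcd.contDiffOn
  by_cases hx0Ω : x0 ∈ Ω
  · exfalso
    have hgx0 : ContDiffAt ℝ 2 g x0 := hg.contDiffAt (hΩo.mem_nhds hx0Ω)
    have hd : ∀ᶠ y in 𝓝 x0, DifferentiableAt ℝ g y :=
      (hgx0.eventually (by norm_num)).mono fun y hy => hy.differentiableAt (by norm_num)
    have hd2 : ∀ v, DifferentiableAt ℝ (fun y => fderiv ℝ g y v) x0 := by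
      intro v
      have hfd : ContDiffAt ℝ 1 (fderiv ℝ g) x0 := hgx0.fderiv_right (le_refl _)
      exact (hfd.clm_apply contDiffAt_const).differentiableAt one_ne_zero
    have hsum : (∑ i, pderiv2 h x0 (eI d i)) + pderiv2 h x0 (eT d) = 2 * ε := by
      have hI : ∀ i, pderiv2 h x0 (eI d i) = pderiv2 g x0 (eI d i) := by
        intro i
        rw [hh_def, pderiv2_add_sq hd (hd2 _)]
        simp [eI]
      have hT : pderiv2 h x0 (eT d) = pderiv2 g x0 (eT d) + 2 * ε := by
        rw [hh_def, pderiv2_add_sq hd (hd2 _)]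
        simp [eT]; ring
      rw [Finset.sum_congr rfl fun i _ => hI i, hT]
      have := heq x0 hx0Ω
      linarith
    have hnp : ∀ v, pderiv2 h x0 v ≤ 0 := fun v =>
      pderiv2_nonpos_of_max hΩo hhsm hx0Ω hmax v
    have h1 : (∑ i, pderiv2 h x0 (eI d i)) ≤ 0 :=
      Finset.sum_nonpos fun i _ => hnp _
    have h2 := hnp (eT d)
    nlinarith
  · have hfr : x0 ∈ frontier Ω := by
      rw [frontier, hΩo.interior_eq]; exact ⟨hx0, hx0Ω⟩
    have h3 : h x ≤ h x0 := hmax hx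
    have h4 : h x0 ≤ ε := by
      rw [hh_def]
      simp only []
      rw [hbd x0 hfr, zero_add]
      nlinarith [hsl x0 hx0, sq_nonneg x0.2, hε.le]
    have h5 : 0 ≤ ε * x.2^2 := by positivity
    simp only [hh_def] at h3 h4
    linarith
lemma pderiv2_neg_dir {E : Type*} [NormedAddCommGroup E] [NormedSpace ℝ E]
    (f : E → ℝ) (z w : E) : pderiv2 f z (-w) = pderiv2 f z w := by
  unfold pderiv2
  have : (fun y => fderiv ℝ f y (-w)) = fun y => -(fderiv ℝ f y w) := by
    funext y; simp
  rw [this, fderiv_fun_neg]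
  simp

lemma pderiv2_neg_fun {E : Type*} [NormedAddCommGroup E] [NormedSpace ℝ E]
    (f : E → ℝ) (z w : E) : pderiv2 (fun y => -(f y)) z w = -pderiv2 f z w := by
  unfold pderiv2
  have : (fun y => fderiv ℝ (fun t => -(f t)) y w) = fun y => -(fderiv ℝ f y w) := by
    funext y; rw [fderiv_fun_neg]; simp
  rw [this, fderiv_fun_neg]
  simp

lemma pderiv2_sub_comp {E : Type*} [NormedAddCommGroup E] [NormedSpace ℝ E]
    {u : E → ℝ} {σ : E → E} {Lσ : E →L[ℝ] E} {x v : E}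
    (hσ : ∀ y, HasFDerivAt σ Lσ y)
    (hdx : ∀ᶠ y in 𝓝 x, DifferentiableAt ℝ u y)
    (hdσx : ∀ᶠ z in 𝓝 (σ x), DifferentiableAt ℝ u z)
    (h2x : DifferentiableAt ℝ (fun z => fderiv ℝ u z v) x)
    (h2σx : DifferentiableAt ℝ (fun z => fderiv ℝ u z (Lσ v)) (σ x)) :
    pderiv2 (fun y => u y - u (σ y)) x v = pderiv2 u x v - pderiv2 u (σ x) (Lσ v) := by
  have hσc : ContinuousAt σ x := (hσ x).differentiableAt.continuousAt
  have hpull : ∀ᶠ y in 𝓝 x, DifferentiableAt ℝ u (σ y) := hσc.eventually hdσx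
  have step1 : (fun y => fderiv ℝ (fun z => u z - u (σ z)) y v) =ᶠ[𝓝 x]
      fun y => fderiv ℝ u y v - fderiv ℝ u (σ y) (Lσ v) := by
    filter_upwards [hdx, hpull] with y h1 h2
    have hcomp : HasFDerivAt (fun z => u (σ z)) ((fderiv ℝ u (σ y)).comp Lσ) y :=
      h2.hasFDerivAt.comp y (hσ y)
    have := (h1.hasFDerivAt.fun_sub hcomp).fderiv
    show (fderiv ℝ (fun z => u z - u (σ z)) y) v = _
    rw [this]
    simp
  have hGσ : HasFDerivAt (fun y => fderiv ℝ u (σ y) (Lσ v))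
      ((fderiv ℝ (fun z => fderiv ℝ u z (Lσ v)) (σ x)).comp Lσ) x :=
    h2σx.hasFDerivAt.comp x (hσ x)
  unfold pderiv2
  rw [step1.fderiv_eq, fderiv_fun_sub h2x hGσ.differentiableAt]
  simp only [ContinuousLinearMap.sub_apply]
  rw [hGσ.fderiv]
  simp
theorem stmt_8 (d : ℕ) (D : Set (Fin d → ℝ)) (hDo : IsOpen D) (hDb : Bornology.IsBounded D)
    (u : (Fin d → ℝ) × ℝ → ℝ) (f : (Fin d → ℝ) → ℝ)
    (Ω : Set ((Fin d → ℝ) × ℝ)) (hΩ : Ω = D ×ˢ Set.Ioo 0 1)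
    (hc : ContinuousOn u (closure Ω))
    (hu : ContDiffOn ℝ 2 u Ω)
    (heq : ∀ x ∈ Ω, (∑ i, pderiv2 u x (eI d i)) + pderiv2 u x (eT d) = - f x.1)
    (hbd : ∀ x ∈ frontier Ω, u x = 0) :
    (∀ x ∈ closure Ω, u x = u (x.1, 1 - x.2)) ∧
    ((∀ x' ∈ D, ContDiffOn ℝ 1 (fun t => u (x', t)) (Set.Icc 0 1)) →
      ∀ x' ∈ D, derivWithin (fun t => u (x', t)) (Set.Icc 0 1) 0 =
        - derivWithin (fun t => u (x', t)) (Set.Icc 0 1) 1) := by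
  have hΩo : IsOpen Ω := by rw [hΩ]; exact hDo.prod isOpen_Ioo
  set σ : (Fin d → ℝ) × ℝ → (Fin d → ℝ) × ℝ := fun y => (y.1, 1 - y.2) with hσdef
  set Lσ : ((Fin d → ℝ) × ℝ) →L[ℝ] ((Fin d → ℝ) × ℝ) :=
    (ContinuousLinearMap.fst ℝ (Fin d → ℝ) ℝ).prod
      (-(ContinuousLinearMap.snd ℝ (Fin d → ℝ) ℝ)) with hLσdef
  have hLσ_apply : ∀ v : (Fin d → ℝ) × ℝ, Lσ v = (v.1, -v.2) := fun v => rfl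
  have hσd : ∀ y, HasFDerivAt σ Lσ y := by
    intro y
    exact hasFDerivAt_fst.prodMk (hasFDerivAt_snd.const_sub 1)
  have hσc : Continuous σ := by
    rw [hσdef]; continuity
  have hσcd : ContDiff ℝ 2 σ := contDiff_fst.prodMk (contDiff_const.sub contDiff_snd)
  have hσΩ : ∀ y, σ y ∈ Ω ↔ y ∈ Ω := by
    intro y
    rw [hΩ]
    simp only [hσdef, Set.mem_prod, Set.mem_Ioo]
    constructor
    · rintro ⟨h1, h2, h3⟩; exact ⟨h1, by linarith, by linarith⟩
    · rintro ⟨h1, h2, h3⟩; exact ⟨h1, by linarith, by linarith⟩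
  have hσcl : ∀ y ∈ closure Ω, σ y ∈ closure Ω := by
    have : closure Ω ⊆ σ ⁻¹' closure Ω :=
      closure_minimal (fun y hy => subset_closure ((hσΩ y).2 hy))
        (isClosed_closure.preimage hσc)
    exact fun y hy => this hy
  have hσfr : ∀ y ∈ frontier Ω, σ y ∈ frontier Ω := by
    intro y hy
    rw [frontier, hΩo.interior_eq] at hy ⊢
    exact ⟨hσcl y hy.1, fun h => hy.2 ((hσΩ y).1 h)⟩
  have hσΩ' : Set.MapsTo σ Ω Ω := fun y hy => (hσΩ y).2 hy
  set w : (Fin d → ℝ) × ℝ → ℝ := fun y => u y - u (σ y) with hwdef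
  have hwc : ContinuousOn w (closure Ω) :=
    hc.sub (hc.comp hσc.continuousOn hσcl)
  have hwsm : ContDiffOn ℝ 2 w Ω := hu.sub (hu.comp hσcd.contDiffOn hσΩ')
  have hdiff : ∀ z ∈ Ω, ∀ᶠ y in 𝓝 z, DifferentiableAt ℝ u y := by
    intro z hz
    exact ((hu.contDiffAt (hΩo.mem_nhds hz)).eventually (by norm_num)).mono
      fun y hy => hy.differentiableAt (by norm_num)
  have hdiff2 : ∀ z ∈ Ω, ∀ v, DifferentiableAt ℝ (fun y => fderiv ℝ u y v) z := by
    intro z hz v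
    have hfd : ContDiffAt ℝ 1 (fderiv ℝ u) z :=
      (hu.contDiffAt (hΩo.mem_nhds hz)).fderiv_right (le_refl _)
    exact (hfd.clm_apply contDiffAt_const).differentiableAt one_ne_zero
  have hwlap : ∀ x ∈ Ω, (∑ i, pderiv2 w x (eI d i)) + pderiv2 w x (eT d) = 0 := by
    intro x hx
    have hσx : σ x ∈ Ω := hσΩ' hx
    have hI : ∀ i, pderiv2 w x (eI d i) = pderiv2 u x (eI d i) - pderiv2 u (σ x) (eI d i) := by
      intro i
      have h := pderiv2_sub_comp (u := u) (σ := σ) (Lσ := Lσ) (x := x) (v := eI d i)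
        hσd (hdiff x hx) (hdiff (σ x) hσx) (hdiff2 x hx _) (hdiff2 (σ x) hσx _)
      have hLI : Lσ (eI d i) = eI d i := by
        rw [hLσ_apply]; simp [eI]
      rw [hLI] at h
      exact h
    have hT : pderiv2 w x (eT d) = pderiv2 u x (eT d) - pderiv2 u (σ x) (eT d) := by
      have hLT : Lσ (eT d) = -(eT d) := by
        rw [hLσ_apply, eT]
        rw [Prod.ext_iff]
        constructor <;> simp
      have h := pderiv2_sub_comp (u := u) (σ := σ) (Lσ := Lσ) (x := x) (v := eT d)
        hσd (hdiff x hx) (hdiff (σ x) hσx) (hdiff2 x hx _) (hdiff2 (σ x) hσx _)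
      rw [hLT, pderiv2_neg_dir] at h
      exact h
    have e1 := heq x hx
    have e2 := heq (σ x) hσx
    have hfst : (σ x).1 = x.1 := rfl
    rw [hfst] at e2
    rw [Finset.sum_congr rfl fun i _ => hI i, hT, Finset.sum_sub_distrib]
    linarith
  have hw0 : ∀ x ∈ frontier Ω, w x = 0 := by
    intro x hx
    rw [hwdef]
    simp only [hbd x hx, hbd (σ x) (hσfr x hx), sub_zero]
  have hcomp : IsCompact (closure Ω) := by
    have hb : Bornology.IsBounded Ω := by
      rw [hΩ]; exact hDb.prod (Metric.isBounded_Ioo 0 1)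
    exact hb.isCompact_closure
  have hsl : ∀ x ∈ closure Ω, x.2^2 ≤ 1 := by
    intro x hx
    rw [hΩ, closure_prod_eq, closure_Ioo (by norm_num : (0:ℝ) ≠ 1)] at hx
    obtain ⟨h1, h2⟩ := hx.2
    nlinarith
  have hle := maxprin hΩo hcomp hsl hwc hwsm hwlap hw0
  have hge := maxprin hΩo hcomp hsl hwc.neg hwsm.neg
    (fun x hx => by
      have := hwlap x hx
      simp only [Pi.neg_def, pderiv2_neg_fun]
      rw [Finset.sum_neg_distrib]
      linarith)
    (fun x hx => by rw [Pi.neg_apply, hw0 x hx, neg_zero])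
  have hkey : ∀ x ∈ closure Ω, u x = u (x.1, 1 - x.2) := by
    intro x hx
    have h1 := hle x hx
    have h2 := hge x hx
    simp only [hwdef, Pi.neg_apply] at h1 h2
    have : u x = u (σ x) := by linarith
    exact this
  refine ⟨hkey, ?_⟩
  intro hC1 x' hx'
  set g : ℝ → ℝ := fun t => u (x', t) with hgdef
  have hmemcl : ∀ t ∈ Set.Icc (0:ℝ) 1, ((x', t) : (Fin d → ℝ) × ℝ) ∈ closure Ω := by
    intro t ht
    rw [hΩ, closure_prod_eq, closure_Ioo (by norm_num : (0:ℝ) ≠ 1)]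
    exact ⟨subset_closure hx', ht⟩
  have hsym : ∀ t ∈ Set.Icc (0:ℝ) 1, g t = g (1 - t) := by
    intro t ht
    exact hkey (x', t) (hmemcl t ht)
  have hg1 : DifferentiableWithinAt ℝ g (Set.Icc 0 1) 1 :=
    (hC1 x' hx').differentiableOn one_ne_zero 1 (by norm_num)
  have hud : UniqueDiffOn ℝ (Set.Icc (0:ℝ) 1) := uniqueDiffOn_Icc (by norm_num)
  set c := derivWithin g (Set.Icc 0 1) 1 with hcdef
  have hgc : HasDerivWithinAt g c (Set.Icc 0 1) 1 := hg1.hasDerivWithinAt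
  have hr : HasDerivWithinAt (fun t : ℝ => 1 - t) (-1) (Set.Icc 0 1) 0 := by
    simpa using ((hasDerivWithinAt_id (0:ℝ) (Set.Icc 0 1)).const_sub 1)
  have hrmaps : Set.MapsTo (fun t : ℝ => 1 - t) (Set.Icc 0 1) (Set.Icc 0 1) := by
    intro t ht
    simp only [Set.mem_Icc] at ht ⊢
    constructor <;> linarith [ht.1, ht.2]
  have hcomp2 : HasDerivWithinAt (fun t => g (1 - t)) (c * (-1)) (Set.Icc 0 1) 0 := by
    have h1 : HasDerivWithinAt g c (Set.Icc 0 1) ((fun t : ℝ => 1 - t) 0) := by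
      simpa using hgc
    exact h1.comp 0 hr hrmaps
  have hg0 : HasDerivWithinAt g (-c) (Set.Icc 0 1) 0 := by
    have heq' : ∀ t ∈ Set.Icc (0:ℝ) 1, g t = g (1 - t) := hsym
    have := hcomp2.congr (fun t ht => heq' t ht) (by simpa using heq' 0 (by norm_num))
    simpa using this
  rw [hgdef] at hg0 ⊢
  rw [hg0.derivWithin (hud 0 (by norm_num))]
end
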